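/- arXiv:1204.0109 — 9 statements merged into one kernel-verified Lean document; each statement's English description precedes it below -/
import Mathlib

section
/- Let g be the unique solution of the Cauchy problem g' = 1/√(a∘g), g(0) = 0, g > 0 on (0,∞), and set h(s) := f(g(s))/√(a(g(s))) for s > 0. Then a function u ∈ C²(Ω) ∩ C(Ω̄) is a positive solution of −div(a(u)Du) + (a'(u)/2)|Du|² = f(u) in Ω with u = 0 on ∂Ω if and only if v := g⁻¹(u) ∈ C²(Ω) ∩ C(Ω̄) is a positive solution of −Δv = h(v) in Ω with v = 0 on ∂Ω. -/
open Set Filter MeasureTheory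
open scoped Topology

/-- `g` solves the Cauchy problem `g' = 1/√(a∘g)` on `(0,∞)`, `g(0) = 0`, `g > 0` on
`(0,∞)`, with `g ∈ C([0,∞)) ∩ C²((0,∞))`. -/
def IsCauchyG (a : ℝ → ℝ) (g : ℝ → ℝ) : Prop :=
  ContinuousOn g (Ici 0) ∧ ContDiffOn ℝ 2 g (Ioi 0) ∧ g 0 = 0 ∧
  (∀ s > (0 : ℝ), 0 < g s) ∧
  ∀ s > (0 : ℝ), HasDerivAt g (1 / Real.sqrt (a (g s))) s

/-- The divergence of a vector field on `ℝ^N`. -/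
noncomputable def divg {N : ℕ} (F : EuclideanSpace ℝ (Fin N) → EuclideanSpace ℝ (Fin N))
    (x : EuclideanSpace ℝ (Fin N)) : ℝ :=
  ∑ i, fderiv ℝ F x (EuclideanSpace.single i 1) i

/-- The Laplacian of a real-valued function on `ℝ^N`. -/
noncomputable def lap {N : ℕ} (v : EuclideanSpace ℝ (Fin N) → ℝ)
    (x : EuclideanSpace ℝ (Fin N)) : ℝ :=
  divg (fun y => gradient v y) x

open InnerProductSpace

section Aux

variable {N : ℕ}

lemma grad_coord (w : EuclideanSpace ℝ (Fin N) → ℝ) (x : EuclideanSpace ℝ (Fin N)) (i : Fin N) :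
    fderiv ℝ w x (EuclideanSpace.single i 1) = gradient w x i := by
  have h1 : fderiv ℝ w x = (toDual ℝ (EuclideanSpace ℝ (Fin N))) (gradient w x) := by
    rw [gradient, LinearIsometryEquiv.apply_symm_apply]
  rw [h1]
  rw [toDual_apply_apply, EuclideanSpace.inner_single_right]
  simp

lemma grad_comp {w : EuclideanSpace ℝ (Fin N) → ℝ} {φ : ℝ → ℝ} {d : ℝ}
    {y : EuclideanSpace ℝ (Fin N)}
    (hw : DifferentiableAt ℝ w y) (hφ : HasDerivAt φ d (w y)) :
    gradient (fun z => φ (w z)) y = d • gradient w y := by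
  have h := (hφ.comp_hasFDerivAt y hw.hasFDerivAt).fderiv
  rw [gradient, gradient, show (fun z => φ (w z)) = φ ∘ w from rfl, h, _root_.map_smul]

lemma sum_sq_eq_norm_sq (w : EuclideanSpace ℝ (Fin N)) : ∑ i, w i * w i = ‖w‖ ^ 2 := by
  rw [← real_inner_self_eq_norm_sq]
  simp only [PiLp.inner_apply, RCLike.inner_apply, conj_trivial]

/-- The key pointwise computation: given `u = g ∘ v` with `v` of class `C²` and positive,
the quasilinear equation for `u` at `x` is equivalent to the semilinear one for `v`. -/
lemma pde_pointwise {Ω : Set (EuclideanSpace ℝ (Fin N))} (hΩ_open : IsOpen Ω)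
    {a f g : ℝ → ℝ} (ha_pos : ∀ s > (0 : ℝ), 0 < a s) (ha_reg : ContDiffOn ℝ 1 a (Ioi 0))
    (hg : IsCauchyG a g)
    {u v : EuclideanSpace ℝ (Fin N) → ℝ}
    (huv : ∀ x ∈ Ω, g (v x) = u x)
    (hv2 : ContDiffOn ℝ 2 v Ω) (hvpos : ∀ x ∈ Ω, 0 < v x)
    {x : EuclideanSpace ℝ (Fin N)} (hx : x ∈ Ω) :
    (- divg (fun y => a (u y) • gradient u y) x
        + deriv a (u x) / 2 * ‖gradient u x‖ ^ 2 = f (u x)) ↔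
    (- lap v x = f (g (v x)) / Real.sqrt (a (g (v x)))) := by
  obtain ⟨hgc, hg2, hg0, hgpos, hgode⟩ := hg
  have hs : 0 < v x := hvpos x hx
  have hat : 0 < a (g (v x)) := ha_pos _ (hgpos _ hs)
  have hsq : 0 < Real.sqrt (a (g (v x))) := Real.sqrt_pos.mpr hat
  set φs : ℝ := Real.sqrt (a (g (v x))) with hφs
  set da : ℝ := deriv a (g (v x)) with hda
  have ha_at : HasDerivAt a da (g (v x)) := by
    have h := (ha_reg.contDiffAt (Ioi_mem_nhds (hgpos _ hs))).differentiableAt one_ne_zero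
    exact h.hasDerivAt
  -- gradient of u on Ω
  have grad_eq : ∀ y ∈ Ω, gradient u y
      = (1 / Real.sqrt (a (g (v y)))) • gradient v y := by
    intro y hy
    have hvy : DifferentiableAt ℝ v y :=
      (hv2.contDiffAt (hΩ_open.mem_nhds hy)).differentiableAt (by norm_num)
    have hEq : u =ᶠ[𝓝 y] fun z => g (v z) := by
      filter_upwards [hΩ_open.mem_nhds hy] with z hz
      exact (huv z hz).symm
    have h1 : gradient u y = gradient (fun z => g (v z)) y := by
      rw [gradient, gradient, hEq.fderiv_eq]
    rw [h1, grad_comp hvy (hgode _ (hvpos y hy))]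
  have F_eq : (fun y => a (u y) • gradient u y)
      =ᶠ[𝓝 x] fun y => Real.sqrt (a (g (v y))) • gradient v y := by
    filter_upwards [hΩ_open.mem_nhds hx] with y hy
    rw [← huv y hy, grad_eq y hy, smul_smul, mul_one_div, Real.div_sqrt]
  -- derivative of the coefficient
  have hg_at : HasDerivAt g (1 / φs) (v x) := hgode _ hs
  have hsqrt_at : HasDerivAt Real.sqrt (1 / (2 * φs)) (a (g (v x))) :=
    Real.hasDerivAt_sqrt hat.ne'
  set dφ : ℝ := 1 / (2 * φs) * da * (1 / φs) with hdφ
  have hφv : HasDerivAt (fun r => Real.sqrt (a (g r))) dφ (v x) := by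
    exact (hsqrt_at.comp _ ha_at).comp _ hg_at
  have hvx : ContDiffAt ℝ 2 v x := hv2.contDiffAt (hΩ_open.mem_nhds hx)
  have hc : HasFDerivAt (fun y => Real.sqrt (a (g (v y)))) (dφ • fderiv ℝ v x) x :=
    hφv.comp_hasFDerivAt x (hvx.differentiableAt (by norm_num)).hasFDerivAt
  have hgradv : DifferentiableAt ℝ (fun y => gradient v y) x := by
    have h1 : ContDiffAt ℝ 1 (fderiv ℝ v) x := hvx.fderiv_right (by norm_num)
    have h2 : DifferentiableAt ℝ (fderiv ℝ v) x := h1.differentiableAt one_ne_zero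
    exact ((toDual ℝ (EuclideanSpace ℝ (Fin N))).symm.toContinuousLinearEquiv.differentiableAt).comp
      x h2
  have hdiv : divg (fun y => a (u y) • gradient u y) x
      = φs * lap v x + dφ * ‖gradient v x‖ ^ 2 := by
    have hF : fderiv ℝ (fun y => a (u y) • gradient u y) x
        = fderiv ℝ (fun y => Real.sqrt (a (g (v y))) • gradient v y) x := F_eq.fderiv_eq
    have hsmul := fderiv_fun_smul hc.differentiableAt hgradv
    simp only [divg, lap]
    rw [hF, hsmul, hc.fderiv]
    have hcomp : ∀ i : Fin N,
        ((φs • fderiv ℝ (fun y => gradient v y) x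
          + (dφ • fderiv ℝ v x).smulRight (gradient v x)) (EuclideanSpace.single i 1)) i
        = φs * (fderiv ℝ (fun y => gradient v y) x (EuclideanSpace.single i 1) i)
          + dφ * (gradient v x i * gradient v x i) := by
      intro i
      have hgc := grad_coord v x i
      simp only [ContinuousLinearMap.add_apply, ContinuousLinearMap.coe_smul',
        Pi.smul_apply, ContinuousLinearMap.smulRight_apply, PiLp.add_apply,
        PiLp.smul_apply, smul_eq_mul, hgc]
      ring
    rw [Finset.sum_congr rfl (fun i _ => hcomp i), Finset.sum_add_distrib,
      ← Finset.mul_sum, ← Finset.mul_sum, sum_sq_eq_norm_sq]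
  have hnu : ‖gradient u x‖ ^ 2 = (1 / φs) ^ 2 * ‖gradient v x‖ ^ 2 := by
    rw [grad_eq x hx, norm_smul, mul_pow, Real.norm_eq_abs, sq_abs]
  have hdd : dφ = da / 2 * (1 / φs) ^ 2 := by
    rw [hdφ, one_div, one_div, mul_inv]
    ring
  rw [← huv x hx, hdiv, hnu]
  constructor
  · intro h
    rw [eq_div_iff hsq.ne']
    rw [hdd] at h
    linear_combination h
  · intro h
    rw [eq_div_iff hsq.ne'] at h
    rw [hdd]
    linear_combination h

end Aux

/-- Equivalence between the quasi-linear problem for `u` and the semi-linear problem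
`−Δv = h(v)` for `v = g⁻¹(u)` (encoded by `u = g ∘ v` with `v ≥ 0` on `Ω̄`),
where `h(s) = f(g(s))/√(a(g(s)))`. -/
theorem quasilinear_semilinear_equivalence {N : ℕ} (Ω : Set (EuclideanSpace ℝ (Fin N)))
    (hΩ_open : IsOpen Ω) (hΩ_bdd : Bornology.IsBounded Ω) (hΩ_ne : Ω.Nonempty)
    (a : ℝ → ℝ) (ha_pos : ∀ s > (0 : ℝ), 0 < a s)
    (ha_reg : ContDiffOn ℝ 1 a (Ioi 0)) (ha_bdd : ∃ c > (0 : ℝ), ∀ s > (0 : ℝ), c ≤ a s)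
    (f : ℝ → ℝ) (hf_pos : ∀ s > (0 : ℝ), 0 < f s) (hf_reg : ContDiffOn ℝ 1 f (Ioi 0))
    (g : ℝ → ℝ) (hg : IsCauchyG a g)
    (u v : EuclideanSpace ℝ (Fin N) → ℝ)
    (huv : ∀ x ∈ closure Ω, 0 ≤ v x ∧ g (v x) = u x) :
    (ContDiffOn ℝ 2 u Ω ∧ ContinuousOn u (closure Ω) ∧
      (∀ x ∈ Ω, 0 < u x) ∧ (∀ x ∈ frontier Ω, u x = 0) ∧
      ∀ x ∈ Ω, - divg (fun y => a (u y) • gradient u y) x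
          + deriv a (u x) / 2 * ‖gradient u x‖ ^ 2 = f (u x)) ↔
    (ContDiffOn ℝ 2 v Ω ∧ ContinuousOn v (closure Ω) ∧
      (∀ x ∈ Ω, 0 < v x) ∧ (∀ x ∈ frontier Ω, v x = 0) ∧
      ∀ x ∈ Ω, - lap v x = f (g (v x)) / Real.sqrt (a (g (v x)))) := by
  obtain ⟨hgc, hg2, hg0, hgpos, hgode⟩ := hg
  have hg' : IsCauchyG a g := ⟨hgc, hg2, hg0, hgpos, hgode⟩
  have huvΩ : ∀ x ∈ Ω, g (v x) = u x := fun x hx => (huv x (subset_closure hx)).2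
  have gnn : ∀ r : ℝ, 0 ≤ r → 0 ≤ g r := by
    intro r hr
    rcases hr.lt_or_eq with h | h
    · exact (hgpos r h).le
    · rw [← h, hg0]
  have hsm : StrictMonoOn g (Ici 0) := by
    apply strictMonoOn_of_deriv_pos (convex_Ici 0) hgc
    intro r hr
    rw [interior_Ici] at hr
    rw [(hgode r hr).deriv]
    have := ha_pos _ (hgpos _ hr)
    positivity
  constructor
  · rintro ⟨hu2, hucont, hupos, hub, hueq⟩
    -- positivity of v
    have hvpos : ∀ x ∈ Ω, 0 < v x := by
      intro x hx
      rcases (huv x (subset_closure hx)).1.lt_or_eq with h | h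
      · exact h
      · exfalso
        have h1 := hupos x hx
        rw [← huvΩ x hx, ← h, hg0] at h1
        exact lt_irrefl 0 h1
    -- boundary condition for v
    have hvb : ∀ x ∈ frontier Ω, v x = 0 := by
      intro x hx
      have hxcl : x ∈ closure Ω := frontier_subset_closure hx
      rcases (huv x hxcl).1.lt_or_eq with h | h
      · exfalso
        have h1 := hgpos _ h
        rw [(huv x hxcl).2, hub x hx] at h1
        exact lt_irrefl 0 h1
      · exact h.symm
    -- continuity of v on the closure
    have hvcont : ContinuousOn v (closure Ω) := by
      have hccl : IsCompact (closure Ω) := hΩ_bdd.isCompact_closure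
      obtain ⟨x₀, hx₀, hmax⟩ := hccl.exists_isMaxOn (hΩ_ne.mono subset_closure) hucont
      have hmax' : ∀ y ∈ closure Ω, u y ≤ u x₀ := fun y hy => hmax hy
      set M : ℝ := v x₀ with hM
      have hM0 : 0 ≤ M := (huv x₀ hx₀).1
      set K : ℝ := g M with hK
      have hK0 : 0 ≤ K := gnn M hM0
      have hvmem : ∀ x ∈ closure Ω, v x ∈ Icc (0:ℝ) M := by
        intro x hx
        refine ⟨(huv x hx).1, ?_⟩
        have h1 : g (v x) ≤ g M := by
          rw [(huv x hx).2]
          calc u x ≤ u x₀ := hmax' x hx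
          _ = g M := ((huv x₀ hx₀).2).symm
        exact (hsm.le_iff_le (mem_Ici.mpr (huv x hx).1) (mem_Ici.mpr hM0)).mp h1
      have humem : ∀ x ∈ closure Ω, u x ∈ Icc (0:ℝ) K := by
        intro x hx
        constructor
        · rw [← (huv x hx).2]
          exact gnn _ (huv x hx).1
        · calc u x ≤ u x₀ := hmax' x hx
          _ = K := ((huv x₀ hx₀).2).symm
      have hgcM : ContinuousOn g (Icc 0 M) := hgc.mono (Icc_subset_Ici_self)
      have hinj : InjOn g (Icc 0 M) := hsm.injOn.mono (Icc_subset_Ici_self)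
      have hmem' : ∀ r : Icc (0:ℝ) M, g r ∈ Icc (0:ℝ) K := by
        intro r
        refine ⟨gnn _ r.2.1, ?_⟩
        rcases r.2.2.lt_or_eq with h | h
        · rcases r.2.1.lt_or_eq with h0 | h0
          · exact (hsm (mem_Ici.mpr r.2.1) (mem_Ici.mpr hM0) h).le
          · rw [← h0, hg0]; exact hK0
        · rw [h]
      let G : Icc (0:ℝ) M → Icc (0:ℝ) K := fun r => ⟨g r, hmem' r⟩
      have hGbij : Function.Bijective G := by
        constructor
        · intro r1 r2 hh
          exact Subtype.ext (hinj r1.2 r2.2 (congrArg Subtype.val hh))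
        · intro y
          have h1 : (y : ℝ) ∈ Icc (g 0) (g M) := by
            rw [hg0]; exact y.2
          obtain ⟨r, hr, hgr⟩ := intermediate_value_Icc hM0 hgcM h1
          exact ⟨⟨r, hr⟩, Subtype.ext hgr⟩
      have hGcont : Continuous G := Continuous.subtype_mk hgcM.restrict _
      let e : Icc (0:ℝ) M ≃ Icc (0:ℝ) K := Equiv.ofBijective G hGbij
      haveI : CompactSpace (Icc (0:ℝ) M) := isCompact_iff_compactSpace.mp isCompact_Icc
      have hecont : Continuous (e : Icc (0:ℝ) M → Icc (0:ℝ) K) := hGcont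
      let h := hecont.homeoOfEquivCompactToT2
      have hkey : ∀ x ∈ closure Ω,
          v x = ((h.symm (projIcc 0 K hK0 (u x)) : Icc (0:ℝ) M) : ℝ) := by
        intro x hx
        have h1 : projIcc 0 K hK0 (u x) = ⟨u x, humem x hx⟩ := projIcc_of_mem _ (humem x hx)
        rw [h1]
        have h2 : h ⟨v x, hvmem x hx⟩ = ⟨u x, humem x hx⟩ := Subtype.ext ((huv x hx).2)
        rw [← h2, Homeomorph.symm_apply_apply]
      have hcont2 : ContinuousOn
          (fun x => ((h.symm (projIcc 0 K hK0 (u x)) : Icc (0:ℝ) M) : ℝ)) (closure Ω) :=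
        (continuous_subtype_val.comp (h.symm.continuous.comp continuous_projIcc)).comp_continuousOn
          hucont
      exact hcont2.congr hkey
    -- C² regularity of v via the inverse function theorem
    have hv2 : ContDiffOn ℝ 2 v Ω := by
      intro x hx
      have hs : 0 < v x := hvpos x hx
      have hgat : ContDiffAt ℝ 2 g (v x) := hg2.contDiffAt (Ioi_mem_nhds hs)
      have hat : 0 < a (g (v x)) := ha_pos _ (hgpos _ hs)
      have hds : (1 / Real.sqrt (a (g (v x)))) ≠ 0 := by
        have := Real.sqrt_pos.mpr hat
        positivity
      set f' : ℝ ≃L[ℝ] ℝ :=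
        ContinuousLinearEquiv.unitsEquivAut ℝ (Units.mk0 _ hds) with hf'def
      have hf' : HasFDerivAt g ((f' : ℝ ≃L[ℝ] ℝ) : ℝ →L[ℝ] ℝ) (v x) := by
        have h0 := (hgode _ hs).hasFDerivAt
        exact h0.congr_fderiv (by ext; simp [hf'def])
      have hst : HasStrictFDerivAt g ((f' : ℝ ≃L[ℝ] ℝ) : ℝ →L[ℝ] ℝ) (v x) :=
        hgat.hasStrictFDerivAt' hf' two_ne_zero
      set G := hst.localInverse g f' (v x) with hGdef
      have hGsmooth : ContDiffAt ℝ 2 G (g (v x)) := hgat.to_localInverse hf' two_ne_zero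
      have hleft : ∀ᶠ r in 𝓝 (v x), G (g r) = r := hst.eventually_left_inverse
      have hvcontx : ContinuousAt v x := (hvcont x (subset_closure hx)).continuousAt
        (mem_of_superset (hΩ_open.mem_nhds hx) subset_closure)
      have hev : v =ᶠ[𝓝 x] fun y => G (u y) := by
        filter_upwards [hvcontx.eventually hleft, hΩ_open.mem_nhds hx] with y h1 h2
        rw [← huvΩ y h2]
        exact h1.symm
      have hu2x : ContDiffAt ℝ 2 u x := hu2.contDiffAt (hΩ_open.mem_nhds hx)
      have hGsmooth' : ContDiffAt ℝ 2 G (u x) := by rwa [huvΩ x hx] at hGsmooth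
      exact ((hGsmooth'.comp x hu2x).congr_of_eventuallyEq hev).contDiffWithinAt
    refine ⟨hv2, hvcont, hvpos, hvb, ?_⟩
    intro x hx
    exact (pde_pointwise hΩ_open ha_pos ha_reg hg' huvΩ hv2 hvpos hx).mp (hueq x hx)
  · rintro ⟨hv2, hvcont, hvpos, hvb, hveq⟩
    have hu2 : ContDiffOn ℝ 2 u Ω := by
      intro x hx
      have hvx2 : ContDiffAt ℝ 2 v x := hv2.contDiffAt (hΩ_open.mem_nhds hx)
      have hgat : ContDiffAt ℝ 2 g (v x) := hg2.contDiffAt (Ioi_mem_nhds (hvpos x hx))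
      have hEq : u =ᶠ[𝓝 x] fun y => g (v y) := by
        filter_upwards [hΩ_open.mem_nhds hx] with z hz
        exact (huvΩ z hz).symm
      exact ((hgat.comp x hvx2).congr_of_eventuallyEq hEq).contDiffWithinAt
    have hucont : ContinuousOn u (closure Ω) := by
      have h1 : ContinuousOn (fun x => g (v x)) (closure Ω) :=
        hgc.comp hvcont (fun x hx => (huv x hx).1)
      exact h1.congr (fun x hx => ((huv x hx).2).symm)
    have hupos : ∀ x ∈ Ω, 0 < u x := by
      intro x hx
      rw [← huvΩ x hx]
      exact hgpos _ (hvpos x hx)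
    have hub : ∀ x ∈ frontier Ω, u x = 0 := by
      intro x hx
      rw [← (huv x (frontier_subset_closure hx)).2, hvb x hx, hg0]
    refine ⟨hu2, hucont, hupos, hub, ?_⟩
    intro x hx
    exact (pde_pointwise hΩ_open ha_pos ha_reg hg' huvΩ hv2 hvpos hx).mpr (hveq x hx)
end

section
/- Let g be the unique solution of the Cauchy problem g' = 1/√(a∘g), g(0) = 0, g > 0 on (0,∞). Then lim_{s→0⁺} g(s)/s^{1/(1−μ)} = (1−μ)^{1/(1−μ)} · a₀^{1/(2(μ−1))}. -/
open Set Filter MeasureTheory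
open scoped Topology

/-- Asymptotic behavior of `g` at the origin:
`lim_{s→0⁺} g(s)/s^{1/(1−μ)} = (1−μ)^{1/(1−μ)} a₀^{1/(2(μ−1))}`. -/
theorem g_asymptotics_at_zero (a : ℝ → ℝ) (ha_pos : ∀ s > (0 : ℝ), 0 < a s)
    (ha_reg : ContDiffOn ℝ 1 a (Ioi 0)) (ha_bdd : ∃ c > (0 : ℝ), ∀ s > (0 : ℝ), c ≤ a s)
    (a₀ μ : ℝ) (ha₀ : 0 < a₀) (hμ₀ : 0 ≤ μ) (hμ₁ : μ < 1)
    (hlim_a : Tendsto (fun s : ℝ => a s * s ^ (2 * μ)) (𝓝[>] 0) (𝓝 a₀))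
    (g : ℝ → ℝ) (hg : IsCauchyG a g) :
    Tendsto (fun s : ℝ => g s / s ^ (1 / (1 - μ))) (𝓝[>] 0)
      (𝓝 ((1 - μ) ^ (1 / (1 - μ)) * a₀ ^ (1 / (2 * (μ - 1))))) := by
  obtain ⟨hgc, _, hg0, hgpos, hgder⟩ := hg
  have h1μ : (0:ℝ) < 1 - μ := by linarith
  -- g tends to 0 from the right
  have hgz : Tendsto g (𝓝[>] (0:ℝ)) (𝓝 0) := by
    have h := (hgc 0 (by simp : (0:ℝ) ∈ Ici 0)).tendsto
    rw [hg0] at h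
    exact h.mono_left (nhdsWithin_mono 0 Ioi_subset_Ici_self)
  have hgz' : Tendsto g (𝓝[>] (0:ℝ)) (𝓝[>] 0) :=
    tendsto_nhdsWithin_of_tendsto_nhds_of_eventually_within _ hgz
      (eventually_nhdsWithin_of_forall fun s hs => hgpos s hs)
  have hA : Tendsto (fun s => a (g s) * (g s) ^ (2*μ)) (𝓝[>] (0:ℝ)) (𝓝 a₀) :=
    hlim_a.comp hgz'
  set L : ℝ := (1 - μ) / Real.sqrt a₀ with hLdef
  have hLpos : 0 < L := div_pos h1μ (Real.sqrt_pos.mpr ha₀)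
  -- derivative of φ = g ^ (1-μ)
  have hφder : ∀ s ∈ Ioi (0:ℝ), HasDerivAt (fun s => (g s) ^ (1 - μ))
      ((1 - μ) / Real.sqrt (a (g s) * (g s) ^ (2*μ))) s := by
    intro s hs
    have hgs : 0 < g s := hgpos s hs
    have has : 0 < a (g s) := ha_pos _ hgs
    have h := (Real.hasDerivAt_rpow_const (p := 1 - μ) (Or.inl hgs.ne')).comp s
      (hgder s hs)
    convert h using 1
    · rfl
    · rfl
    · rfl
    have hsq : Real.sqrt (a (g s) * (g s) ^ (2*μ))
        = Real.sqrt (a (g s)) * (g s) ^ μ := by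
      rw [Real.sqrt_mul has.le, Real.sqrt_eq_rpow ((g s) ^ (2*μ)), ← Real.rpow_mul hgs.le]
      ring_nf
    rw [hsq]
    rw [show (1:ℝ) - μ - 1 = -μ by ring, Real.rpow_neg hgs.le]
    have hμpos : (0:ℝ) < (g s) ^ μ := Real.rpow_pos_of_pos hgs μ
    have hsqp : 0 < Real.sqrt (a (g s)) := Real.sqrt_pos.mpr has
    field_simp
  -- limit of the derivative
  have hφ'lim : Tendsto (fun s => (1 - μ) / Real.sqrt (a (g s) * (g s) ^ (2*μ)))
      (𝓝[>] (0:ℝ)) (𝓝 L) := by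
    have hsqrt : Tendsto (fun s => Real.sqrt (a (g s) * (g s) ^ (2*μ)))
        (𝓝[>] (0:ℝ)) (𝓝 (Real.sqrt a₀)) :=
      (Real.continuous_sqrt.continuousAt).tendsto.comp hA
    exact tendsto_const_nhds.div hsqrt (Real.sqrt_pos.mpr ha₀).ne'
  -- L'Hôpital
  have hquot : Tendsto (fun s => (g s) ^ (1 - μ) / s) (𝓝[>] (0:ℝ)) (𝓝 L) := by
    apply HasDerivAt.lhopital_zero_nhdsGT
      (f' := fun s => (1 - μ) / Real.sqrt (a (g s) * (g s) ^ (2*μ)))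
      (g' := fun _ => (1:ℝ))
    · exact eventually_nhdsWithin_of_forall hφder
    · exact eventually_nhdsWithin_of_forall fun s _ => hasDerivAt_id s
    · exact eventually_nhdsWithin_of_forall fun s _ => one_ne_zero
    · have hc : ContinuousAt (fun x : ℝ => x ^ (1 - μ)) 0 :=
        Real.continuousAt_rpow_const 0 (1 - μ) (Or.inr h1μ.le)
      have := hc.tendsto.comp hgz
      rwa [Real.zero_rpow h1μ.ne'] at this
    · exact tendsto_id.mono_left nhdsWithin_le_nhds
    · simpa using hφ'lim
  -- raise to the power 1/(1-μ)
  have hfinal : Tendsto (fun s => ((g s) ^ (1 - μ) / s) ^ (1 / (1 - μ)))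
      (𝓝[>] (0:ℝ)) (𝓝 (L ^ (1 / (1 - μ)))) :=
    ((Real.continuousAt_rpow_const L (1 / (1 - μ)) (Or.inl hLpos.ne')).tendsto).comp hquot
  have heq : ∀ᶠ s in 𝓝[>] (0:ℝ),
      ((g s) ^ (1 - μ) / s) ^ (1 / (1 - μ)) = g s / s ^ (1 / (1 - μ)) := by
    refine eventually_nhdsWithin_of_forall fun s hs => ?_
    have hgs : 0 < g s := hgpos s hs
    have hspos : (0:ℝ) < s := hs
    rw [Real.div_rpow (Real.rpow_nonneg hgs.le _) hspos.le,
      ← Real.rpow_mul hgs.le, mul_one_div_cancel h1μ.ne', Real.rpow_one]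
  have hval : L ^ (1 / (1 - μ)) = (1 - μ) ^ (1 / (1 - μ)) * a₀ ^ (1 / (2 * (μ - 1))) := by
    rw [hLdef, Real.div_rpow h1μ.le (Real.sqrt_nonneg _), Real.sqrt_eq_rpow,
      ← Real.rpow_mul ha₀.le, div_eq_mul_inv, ← Real.rpow_neg ha₀.le]
    congr 1
    have h3 : μ - 1 ≠ 0 := by linarith
    field_simp
    congr 1
    rw [show (2:ℝ) * (μ - 1) = -(2 * (1 - μ)) by ring, div_neg]
  rw [← hval]
  exact hfinal.congr' heq
end

section
/- Let g be the unique solution of the Cauchy problem g' = 1/√(a∘g), g(0) = 0, g > 0 on (0,∞), and set h(s) := f(g(s))/√(a(g(s))) for s > 0. Then lim_{s→0⁺} h(s)/s^{(μ−γ)/(1−μ)} = f₀ · a₀^{(1−γ)/(2(μ−1))} · (1−μ)^{−(γ−μ)/(1−μ)}. -/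
open Set Filter MeasureTheory
open scoped Topology

private lemma sqrt_rpow_two_mul {u : ℝ} (hu : 0 ≤ u) (r : ℝ) :
    Real.sqrt (u ^ (2 * r)) = u ^ r := by
  rw [show 2 * r = r * 2 by ring, Real.rpow_mul hu,
    show ((u ^ r : ℝ) ^ (2:ℝ)) = (u ^ r) ^ (2:ℕ) by
      rw [← Real.rpow_natCast (u ^ r) 2]; norm_num]
  exact Real.sqrt_sq (Real.rpow_nonneg hu r)

private lemma sqrtA_integrable {a : ℝ → ℝ} (ha_pos : ∀ s > (0:ℝ), 0 < a s)
    (ha_cont : ContinuousOn a (Ioi 0)) {μ a₀ : ℝ} (hμ₀ : 0 ≤ μ) (hμ₁ : μ < 1) (ha₀ : 0 < a₀)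
    {δ : ℝ} (hδ : 0 < δ) (hδa : ∀ u ∈ Ioo (0:ℝ) δ, a u * u ^ (2 * μ) < a₀ + 1)
    {t : ℝ} (ht : 0 < t) :
    IntervalIntegrable (fun u => Real.sqrt (a u)) volume 0 t := by
  have hsq_cont : ContinuousOn (fun u => Real.sqrt (a u)) (Ioi 0) :=
    Real.continuous_sqrt.comp_continuousOn ha_cont
  set m := min (δ / 2) t with hm_def
  have hm : 0 < m := lt_min (by linarith) ht
  have hmt : m ≤ t := min_le_right _ _
  have hmδ : m < δ := lt_of_le_of_lt (min_le_left _ _) (by linarith)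
  have int1 : IntegrableOn (fun u => Real.sqrt (a u)) (Ioc 0 m) := by
    have hg1 : IntegrableOn (fun u : ℝ => Real.sqrt (a₀ + 1) * u ^ (-μ)) (Ioc 0 m) := by
      have h := intervalIntegral.intervalIntegrable_rpow' (a := 0) (b := m)
        (show (-1:ℝ) < -μ by linarith)
      exact ((intervalIntegrable_iff_integrableOn_Ioc_of_le hm.le).mp h).const_mul _
    refine hg1.mono' ((hsq_cont.mono Ioc_subset_Ioi_self).aestronglyMeasurable
      measurableSet_Ioc) ?_
    rw [ae_restrict_iff' measurableSet_Ioc]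
    filter_upwards with u hu
    have hu0 : 0 < u := hu.1
    have huδ : u < δ := lt_of_le_of_lt hu.2 hmδ
    have e : u ^ (2 * μ) * u ^ (-(2 * μ)) = 1 := by
      rw [← Real.rpow_add hu0]; simp
    have h2 : a u ≤ (a₀ + 1) * u ^ (-(2 * μ)) := by
      calc a u = a u * u ^ (2 * μ) * u ^ (-(2 * μ)) := by rw [mul_assoc, e, mul_one]
        _ ≤ (a₀ + 1) * u ^ (-(2 * μ)) :=
            mul_le_mul_of_nonneg_right (le_of_lt (hδa u ⟨hu0, huδ⟩)) (Real.rpow_nonneg hu0.le _)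
    have h3 : Real.sqrt (a u) ≤ Real.sqrt (a₀ + 1) * u ^ (-μ) := by
      calc Real.sqrt (a u) ≤ Real.sqrt ((a₀ + 1) * u ^ (-(2 * μ))) := Real.sqrt_le_sqrt h2
        _ = Real.sqrt (a₀ + 1) * u ^ (-μ) := by
            rw [Real.sqrt_mul (by linarith), show -(2*μ) = 2 * (-μ) by ring,
              sqrt_rpow_two_mul hu0.le]
    simpa [Real.norm_eq_abs, abs_of_nonneg (Real.sqrt_nonneg _)] using h3
  have int2 : IntegrableOn (fun u => Real.sqrt (a u)) (Ioc m t) := by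
    have : ContinuousOn (fun u => Real.sqrt (a u)) (Icc m t) :=
      hsq_cont.mono (fun x hx => lt_of_lt_of_le hm hx.1)
    exact this.integrableOn_Icc.mono_set Ioc_subset_Icc_self
  rw [intervalIntegrable_iff_integrableOn_Ioc_of_le ht.le, ← Ioc_union_Ioc_eq_Ioc hm.le hmt]
  exact int1.union int2

private lemma F_asymp {a : ℝ → ℝ} (ha_pos : ∀ s > (0:ℝ), 0 < a s)
    {μ a₀ : ℝ} (hμ₀ : 0 ≤ μ) (hμ₁ : μ < 1) (ha₀ : 0 < a₀)
    (hlim_a : Tendsto (fun s : ℝ => a s * s ^ (2 * μ)) (𝓝[>] 0) (𝓝 a₀))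
    (hInt : ∀ t > (0:ℝ), IntervalIntegrable (fun u => Real.sqrt (a u)) volume 0 t) :
    Tendsto (fun t : ℝ => (∫ u in (0:ℝ)..t, Real.sqrt (a u)) / t ^ (1 - μ)) (𝓝[>] 0)
      (𝓝 (Real.sqrt a₀ / (1 - μ))) := by
  have h1μ : (0:ℝ) < 1 - μ := by linarith
  rw [Metric.tendsto_nhdsWithin_nhds]
  intro ε hε
  set ε₁ := (1 - μ) * ε / 2 with hε₁def
  have hε₁ : 0 < ε₁ := by positivity
  have hG : Tendsto (fun u : ℝ => Real.sqrt (a u * u ^ (2 * μ))) (𝓝[>] 0)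
      (𝓝 (Real.sqrt a₀)) := (Real.continuous_sqrt.continuousAt.tendsto).comp hlim_a
  have h1 : ∀ᶠ u in 𝓝[>] (0:ℝ), |Real.sqrt (a u * u ^ (2 * μ)) - Real.sqrt a₀| < ε₁ := by
    have := hG (Metric.ball_mem_nhds (Real.sqrt a₀) hε₁)
    filter_upwards [this] with u hu
    simpa [Real.dist_eq] using hu
  rw [eventually_iff, mem_nhdsGT_iff_exists_Ioo_subset] at h1
  obtain ⟨δ, hδ0, hδa⟩ := h1
  refine ⟨δ, hδ0, ?_⟩
  intro t ht hdist
  have ht0 : 0 < t := ht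
  have htδ : t < δ := by
    rw [Real.dist_eq, sub_zero, abs_of_pos ht0] at hdist
    exact hdist
  have htp : (0:ℝ) < t ^ (1 - μ) := Real.rpow_pos_of_pos ht0 _
  have hIμ : IntervalIntegrable (fun u : ℝ => u ^ (-μ)) volume 0 t :=
    intervalIntegral.intervalIntegrable_rpow' (by linarith)
  have hJ : (∫ u in (0:ℝ)..t, u ^ (-μ)) = t ^ (1 - μ) / (1 - μ) := by
    rw [integral_rpow (Or.inl (by linarith))]
    rw [Real.zero_rpow (by intro h; linarith : -μ + 1 ≠ 0)]
    rw [show -μ + 1 = 1 - μ by ring]; ring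
  have key : |(∫ u in (0:ℝ)..t, Real.sqrt (a u)) - Real.sqrt a₀ * (t ^ (1 - μ) / (1 - μ))|
      ≤ ε₁ * (t ^ (1 - μ) / (1 - μ)) := by
    have hsub : (∫ u in (0:ℝ)..t, Real.sqrt (a u)) - Real.sqrt a₀ * (t ^ (1 - μ) / (1 - μ))
        = ∫ u in (0:ℝ)..t, (Real.sqrt (a u) - Real.sqrt a₀ * u ^ (-μ)) := by
      rw [intervalIntegral.integral_sub (hInt t ht0) (hIμ.const_mul _),
        intervalIntegral.integral_const_mul, hJ]
    rw [hsub]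
    have hb : ∀ᵐ u ∂(volume.restrict (Set.uIoc (0:ℝ) t)),
        ‖Real.sqrt (a u) - Real.sqrt a₀ * u ^ (-μ)‖ ≤ ε₁ * u ^ (-μ) := by
      rw [ae_restrict_iff' measurableSet_uIoc]
      filter_upwards with u hu
      rw [uIoc_of_le ht0.le] at hu
      have hu0 : 0 < u := hu.1
      have huδ : u < δ := lt_of_le_of_lt hu.2 htδ
      have e1 : Real.sqrt (a u * u ^ (2 * μ)) = Real.sqrt (a u) * u ^ μ := by
        rw [Real.sqrt_mul (ha_pos u hu0).le, sqrt_rpow_two_mul hu0.le]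
      have e2 : u ^ μ * u ^ (-μ) = 1 := by rw [← Real.rpow_add hu0]; simp
      have e3 : Real.sqrt (a u) - Real.sqrt a₀ * u ^ (-μ)
          = (Real.sqrt (a u * u ^ (2 * μ)) - Real.sqrt a₀) * u ^ (-μ) := by
        rw [e1, sub_mul, mul_assoc, e2, mul_one]
      rw [Real.norm_eq_abs, e3, abs_mul, abs_of_nonneg (Real.rpow_nonneg hu0.le _)]
      exact mul_le_mul_of_nonneg_right (le_of_lt (hδa ⟨hu0, huδ⟩)) (Real.rpow_nonneg hu0.le _)
    have h5 := intervalIntegral.norm_integral_le_of_norm_le ht0.le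
      (by rw [← uIoc_of_le ht0.le]; exact (ae_restrict_iff' measurableSet_uIoc).mp hb)
      (hIμ.const_mul ε₁)
    rw [intervalIntegral.integral_const_mul, hJ] at h5
    rw [Real.norm_eq_abs] at h5
    exact h5
  rw [Real.dist_eq]
  have e4 : (∫ u in (0:ℝ)..t, Real.sqrt (a u)) / t ^ (1 - μ) - Real.sqrt a₀ / (1 - μ)
      = ((∫ u in (0:ℝ)..t, Real.sqrt (a u)) - Real.sqrt a₀ * (t ^ (1 - μ) / (1 - μ)))
        / t ^ (1 - μ) := by
    field_simp
  rw [e4, abs_div, abs_of_pos htp]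
  have e5 : ε₁ * (t ^ (1 - μ) / (1 - μ)) / t ^ (1 - μ) = ε / 2 := by
    rw [hε₁def]; field_simp
  calc _ ≤ ε₁ * (t ^ (1 - μ) / (1 - μ)) / t ^ (1 - μ) := by gcongr
    _ < ε := by rw [e5]; linarith

/-- Asymptotic behavior of `h(s) = f(g(s))/√(a(g(s)))` at the origin:
`lim_{s→0⁺} h(s)/s^{(μ−γ)/(1−μ)} = f₀ a₀^{(1−γ)/(2(μ−1))} (1−μ)^{−(γ−μ)/(1−μ)}`. -/
theorem h_asymptotics_at_zero (a : ℝ → ℝ) (ha_pos : ∀ s > (0 : ℝ), 0 < a s)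
    (ha_reg : ContDiffOn ℝ 1 a (Ioi 0)) (ha_bdd : ∃ c > (0 : ℝ), ∀ s > (0 : ℝ), c ≤ a s)
    (f : ℝ → ℝ) (hf_pos : ∀ s > (0 : ℝ), 0 < f s) (hf_reg : ContDiffOn ℝ 1 f (Ioi 0))
    (a₀ f₀ μ γ : ℝ) (ha₀ : 0 < a₀) (hf₀ : 0 < f₀) (hμ₀ : 0 ≤ μ) (hμ₁ : μ < 1) (hγ : 1 < γ)
    (hlim_a : Tendsto (fun s : ℝ => a s * s ^ (2 * μ)) (𝓝[>] 0) (𝓝 a₀))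
    (hlim_f : Tendsto (fun s : ℝ => f s * s ^ γ) (𝓝[>] 0) (𝓝 f₀))
    (g : ℝ → ℝ) (hg : IsCauchyG a g) :
    Tendsto (fun s : ℝ => (f (g s) / Real.sqrt (a (g s))) / s ^ ((μ - γ) / (1 - μ)))
      (𝓝[>] 0)
      (𝓝 (f₀ * a₀ ^ ((1 - γ) / (2 * (μ - 1))) * (1 - μ) ^ (-(γ - μ) / (1 - μ)))) := by
  obtain ⟨hgc, hgC2, hg0, hgpos, hgd⟩ := hg
  have ha_cont : ContinuousOn a (Ioi 0) := ha_reg.continuousOn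
  have h1μ : (0:ℝ) < 1 - μ := by linarith
  have hsq_cont : ContinuousOn (fun u => Real.sqrt (a u)) (Ioi 0) :=
    Real.continuous_sqrt.comp_continuousOn ha_cont
  -- integrability of √(a ·) near 0
  have hbd := hlim_a (Iio_mem_nhds (show a₀ < a₀ + 1 by linarith))
  rw [mem_map, mem_nhdsGT_iff_exists_Ioo_subset] at hbd
  obtain ⟨δ, hδ0, hδsub⟩ := hbd
  have hδa : ∀ u ∈ Ioo (0:ℝ) δ, a u * u ^ (2 * μ) < a₀ + 1 := fun u hu => hδsub hu
  have hInt : ∀ t > (0:ℝ), IntervalIntegrable (fun u => Real.sqrt (a u)) volume 0 t :=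
    fun t ht => sqrtA_integrable ha_pos ha_cont hμ₀ hμ₁ ha₀ hδ0 hδa ht
  set F : ℝ → ℝ := fun t => ∫ u in (0:ℝ)..t, Real.sqrt (a u) with hFdef
  have hC : Tendsto (fun t : ℝ => F t / t ^ (1 - μ)) (𝓝[>] 0)
      (𝓝 (Real.sqrt a₀ / (1 - μ))) := F_asymp ha_pos hμ₀ hμ₁ ha₀ hlim_a hInt
  -- F tends to 0 at 0⁺
  have hF0 : Tendsto F (𝓝[>] (0:ℝ)) (𝓝 0) := by
    have hpow : Tendsto (fun t : ℝ => t ^ (1 - μ)) (𝓝[>] (0:ℝ)) (𝓝 0) := by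
      have h := (Real.continuousAt_rpow_const 0 (1 - μ) (Or.inr h1μ.le)).tendsto
      rw [Real.zero_rpow h1μ.ne'] at h
      exact h.mono_left nhdsWithin_le_nhds
    have h2 := hC.mul hpow
    rw [mul_zero] at h2
    apply h2.congr'
    filter_upwards [self_mem_nhdsWithin] with t ht
    exact div_mul_cancel₀ _ (Real.rpow_pos_of_pos ht _).ne'
  -- g tends to 0⁺ at 0⁺
  have hgten : Tendsto g (𝓝[>] (0:ℝ)) (𝓝[>] (0:ℝ)) := by
    have h1 : Tendsto g (𝓝[Ici 0] (0:ℝ)) (𝓝 0) := by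
      have := hgc 0 self_mem_Ici
      rw [ContinuousWithinAt, hg0] at this
      exact this
    have h2 : Tendsto g (𝓝[>] (0:ℝ)) (𝓝 0) :=
      h1.mono_left (nhdsWithin_mono 0 Ioi_subset_Ici_self)
    rw [tendsto_nhdsWithin_iff]
    exact ⟨h2, eventually_mem_nhdsWithin.mono fun x hx => hgpos x hx⟩
  -- F ∘ g = id on (0,∞)
  have hFder : ∀ t > (0:ℝ), HasDerivAt F (Real.sqrt (a t)) t := by
    intro t ht
    exact intervalIntegral.integral_hasDerivAt_right (hInt t ht)
      ⟨Ioi 0, Ioi_mem_nhds ht, hsq_cont.aestronglyMeasurable measurableSet_Ioi⟩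
      (hsq_cont.continuousAt (Ioi_mem_nhds ht))
  have hφd : ∀ s > (0:ℝ), HasDerivAt (fun s => F (g s) - s) 0 s := by
    intro s hs
    have hgs := hgpos s hs
    have h1 := (hFder (g s) hgs).comp s (hgd s hs)
    have hane : Real.sqrt (a (g s)) ≠ 0 := ne_of_gt (Real.sqrt_pos.mpr (ha_pos _ hgs))
    have h2 : HasDerivAt (fun s => F (g s)) 1 s := by
      exact h1.congr_deriv (mul_one_div_cancel hane)
    exact (h2.sub (hasDerivAt_id s)).congr_deriv (sub_self 1)
  have hconst : ∀ s > (0:ℝ), ∀ s' ∈ Ioo (0:ℝ) s, F (g s') - s' = F (g s) - s := by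
    intro s hs s' hs'
    obtain ⟨c', hc'm, hc'⟩ := exists_hasDerivAt_eq_slope (fun s => F (g s) - s) (fun _ => 0)
      hs'.2
      (fun x hx => ((hφd x (lt_of_lt_of_le hs'.1 hx.1)).continuousAt).continuousWithinAt)
      (fun x hx => hφd x (lt_trans hs'.1 hx.1))
    have hne : s - s' ≠ 0 := sub_ne_zero.mpr (ne_of_gt hs'.2)
    rw [eq_comm, div_eq_zero_iff] at hc'
    rcases hc' with h | h
    · linarith [sub_eq_zero.mp h]
    · exact absurd h hne
  have hFg : ∀ s > (0:ℝ), F (g s) = s := by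
    intro s hs
    have hlim : Tendsto (fun s' => F (g s') - s') (𝓝[>] (0:ℝ)) (𝓝 0) := by
      have h1 := hF0.comp hgten
      have h2 : Tendsto (fun s' : ℝ => s') (𝓝[>] (0:ℝ)) (𝓝 0) :=
        tendsto_id.mono_right nhdsWithin_le_nhds
      simpa using h1.sub h2
    have hlim2 : Tendsto (fun s' => F (g s') - s') (𝓝[>] (0:ℝ)) (𝓝 (F (g s) - s)) := by
      apply Tendsto.congr' ?_ tendsto_const_nhds
      filter_upwards [Ioo_mem_nhdsGT_of_mem (⟨le_refl 0, hs⟩ : (0:ℝ) ∈ Ico 0 s)] with s' hs'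
      exact (hconst s hs s' hs').symm
    have := tendsto_nhds_unique hlim2 hlim
    linarith
  -- limit of the auxiliary function H
  set p : ℝ := (μ - γ) / (1 - μ) with hp
  set l : ℝ := Real.sqrt a₀ / (1 - μ) with hl_def
  have hsa₀ : 0 < Real.sqrt a₀ := Real.sqrt_pos.mpr ha₀
  have hl : 0 < l := div_pos hsa₀ h1μ
  have hlp : 0 < l ^ p := Real.rpow_pos_of_pos hl p
  have hH : Tendsto (fun t : ℝ => (f t / Real.sqrt (a t)) / (F t) ^ p) (𝓝[>] 0)
      (𝓝 (f₀ * a₀ ^ ((1 - γ) / (2 * (μ - 1))) * (1 - μ) ^ (-(γ - μ) / (1 - μ)))) := by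
    have hAB : Tendsto
        (fun t => (f t * t ^ γ) / (Real.sqrt (a t * t ^ (2 * μ)) * (F t / t ^ (1 - μ)) ^ p))
        (𝓝[>] 0) (𝓝 (f₀ / (Real.sqrt a₀ * l ^ p))) := by
      apply Tendsto.div hlim_f ?_ (ne_of_gt (mul_pos hsa₀ hlp))
      exact ((Real.continuous_sqrt.continuousAt.tendsto).comp hlim_a).mul
        (((Real.continuousAt_rpow_const l p (Or.inl hl.ne')).tendsto).comp hC)
    have hLeq : f₀ / (Real.sqrt a₀ * l ^ p)
        = f₀ * a₀ ^ ((1 - γ) / (2 * (μ - 1))) * (1 - μ) ^ (-(γ - μ) / (1 - μ)) := by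
      have hne1 : (1:ℝ) - μ ≠ 0 := h1μ.ne'
      have hne2 : μ - 1 ≠ 0 := by intro h; apply hne1; linarith
      have e1 : (1 - γ) / (2 * (μ - 1)) = -(1/2 + 1/2 * p) := by
        rw [hp]; field_simp; ring
      have e2 : -(γ - μ) / (1 - μ) = p := by rw [hp]; ring
      rw [e1, e2, hl_def, Real.sqrt_eq_rpow,
        Real.div_rpow (Real.rpow_nonneg ha₀.le _) h1μ.le, ← Real.rpow_mul ha₀.le,
        Real.rpow_neg ha₀.le, Real.rpow_add ha₀]
      have h2 : (0:ℝ) < a₀ ^ (1/2 : ℝ) := Real.rpow_pos_of_pos ha₀ _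
      have h3 : (0:ℝ) < a₀ ^ (1/2 * p : ℝ) := Real.rpow_pos_of_pos ha₀ _
      have h4 : (0:ℝ) < (1 - μ) ^ p := Real.rpow_pos_of_pos h1μ _
      field_simp
    rw [← hLeq]
    apply hAB.congr'
    have hev : ∀ᶠ t in 𝓝[>] (0:ℝ), 0 < F t / t ^ (1 - μ) :=
      hC.eventually (lt_mem_nhds hl)
    filter_upwards [hev, self_mem_nhdsWithin] with t hCt ht0'
    have ht0 : (0:ℝ) < t := ht0'
    have htp : (0:ℝ) < t ^ (1 - μ) := Real.rpow_pos_of_pos ht0 _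
    have hat : 0 < a t := ha_pos t ht0
    have hsat : 0 < Real.sqrt (a t) := Real.sqrt_pos.mpr hat
    have e1 : Real.sqrt (a t * t ^ (2 * μ)) = Real.sqrt (a t) * t ^ μ := by
      rw [Real.sqrt_mul hat.le, sqrt_rpow_two_mul ht0.le]
    have e2 : F t = (F t / t ^ (1 - μ)) * t ^ (1 - μ) := (div_mul_cancel₀ _ htp.ne').symm
    have e3 : (F t) ^ p = (F t / t ^ (1 - μ)) ^ p * t ^ (μ - γ) := by
      conv_lhs => rw [e2]
      rw [Real.mul_rpow hCt.le (Real.rpow_nonneg ht0.le _), ← Real.rpow_mul ht0.le]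
      rw [show (1 - μ) * p = μ - γ by rw [hp]; field_simp]
    have htt : t ^ γ * t ^ (μ - γ) = t ^ μ := by
      rw [← Real.rpow_add ht0, show γ + (μ - γ) = μ by ring]
    have hCp : (0:ℝ) < (F t / t ^ (1 - μ)) ^ p := Real.rpow_pos_of_pos hCt _
    have htμ : (0:ℝ) < t ^ μ := Real.rpow_pos_of_pos ht0 _
    have htγ : (0:ℝ) < t ^ γ := Real.rpow_pos_of_pos ht0 _
    have htμγ : (0:ℝ) < t ^ (μ - γ) := Real.rpow_pos_of_pos ht0 _
    rw [e1, e3]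
    rw [div_eq_div_iff (by positivity) (by positivity)]
    field_simp
    linear_combination (f t) * htt
  -- conclude by composition with g
  have hcomp := hH.comp hgten
  apply hcomp.congr'
  filter_upwards [self_mem_nhdsWithin] with s hs
  have hs0 : (0:ℝ) < s := hs
  simp only [Function.comp]
  rw [hFg s hs0]
end

section
/- Let g be the unique solution of the Cauchy problem g' = 1/√(a∘g), g(0) = 0, g > 0 on (0,∞). If 2f'(s)a(s) ≤ f(s)a'(s) for every s > 0, then the function s ↦ f(g(s))/√(a(g(s))) is nonincreasing on (0,∞). -/
open Set Filter MeasureTheory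
open scoped Topology

/-- If `2f'(s)a(s) ≤ f(s)a'(s)` for every `s > 0`, then `s ↦ f(g(s))/√(a(g(s)))`
is nonincreasing on `(0,∞)`. -/
theorem h_nonincreasing (a : ℝ → ℝ) (ha_pos : ∀ s > (0 : ℝ), 0 < a s)
    (ha_reg : ContDiffOn ℝ 1 a (Ioi 0)) (ha_bdd : ∃ c > (0 : ℝ), ∀ s > (0 : ℝ), c ≤ a s)
    (f : ℝ → ℝ) (hf_pos : ∀ s > (0 : ℝ), 0 < f s) (hf_reg : ContDiffOn ℝ 1 f (Ioi 0))
    (hfa : ∀ s > (0 : ℝ), 2 * deriv f s * a s ≤ f s * deriv a s)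
    (g : ℝ → ℝ) (hg : IsCauchyG a g) :
    AntitoneOn (fun s => f (g s) / Real.sqrt (a (g s))) (Ioi 0) := by
  obtain ⟨hgc, hg2, hg0, hgpos, hgderiv⟩ := hg
  have key : ∀ s ∈ Ioi (0:ℝ), HasDerivAt (fun s => f (g s) / Real.sqrt (a (g s)))
      ((deriv f (g s) * (1 / Real.sqrt (a (g s))) * Real.sqrt (a (g s)) -
        f (g s) * (deriv a (g s) * (1 / Real.sqrt (a (g s))) / (2 * Real.sqrt (a (g s))))) /
        (Real.sqrt (a (g s)))^2) s := by
    intro s hs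
    have hs' : (0:ℝ) < s := hs
    have hu : 0 < g s := hgpos s hs'
    have hA : 0 < a (g s) := ha_pos _ hu
    have hsA : 0 < Real.sqrt (a (g s)) := Real.sqrt_pos.mpr hA
    have hfd : HasDerivAt f (deriv f (g s)) (g s) :=
      ((hf_reg.differentiableOn one_ne_zero _ hu).differentiableAt
        (isOpen_Ioi.mem_nhds hu)).hasDerivAt
    have had : HasDerivAt a (deriv a (g s)) (g s) :=
      ((ha_reg.differentiableOn one_ne_zero _ hu).differentiableAt
        (isOpen_Ioi.mem_nhds hu)).hasDerivAt
    have hgd := hgderiv s hs'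
    have h1 : HasDerivAt (fun s => f (g s)) (deriv f (g s) * (1 / Real.sqrt (a (g s)))) s :=
      hfd.comp s hgd
    have h2 : HasDerivAt (fun s => a (g s)) (deriv a (g s) * (1 / Real.sqrt (a (g s)))) s :=
      had.comp s hgd
    have h3 : HasDerivAt (fun s => Real.sqrt (a (g s)))
        (deriv a (g s) * (1 / Real.sqrt (a (g s))) / (2 * Real.sqrt (a (g s)))) s :=
      h2.sqrt hA.ne'
    exact h1.div h3 hsA.ne'
  apply antitoneOn_of_deriv_nonpos (convex_Ioi 0)
  · exact fun s hs => ((key s hs).differentiableAt).continuousAt.continuousWithinAt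
  · rw [interior_Ioi]
    exact fun s hs => (key s hs).differentiableAt.differentiableWithinAt
  · rw [interior_Ioi]
    intro s hs
    rw [(key s hs).deriv]
    have hs' : (0:ℝ) < s := hs
    have hu : 0 < g s := hgpos s hs'
    have hA : 0 < a (g s) := ha_pos _ hu
    have hsA : 0 < Real.sqrt (a (g s)) := Real.sqrt_pos.mpr hA
    have hsq : Real.sqrt (a (g s)) ^ 2 = a (g s) := Real.sq_sqrt hA.le
    apply div_nonpos_of_nonpos_of_nonneg _ (sq_nonneg _)
    have hfa' := hfa (g s) hu
    have hfp := hf_pos (g s) hu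
    rw [sub_nonpos]
    have e1 : deriv f (g s) * (1 / Real.sqrt (a (g s))) * Real.sqrt (a (g s)) = deriv f (g s) := by
      field_simp
    have e2 : f (g s) * (deriv a (g s) * (1 / Real.sqrt (a (g s))) / (2 * Real.sqrt (a (g s))))
        = f (g s) * deriv a (g s) / (2 * a (g s)) := by
      field_simp
      rw [hsq]
    rw [e1, e2, le_div_iff₀ (by positivity)]
    nlinarith [hfa']
end

section
/- Let g be the unique solution of the Cauchy problem g' = 1/√(a∘g), g(0) = 0, g > 0 on (0,∞). Then lim_{s→+∞} g(s)/s^{2/(k+2)} = ((k+2)/(2√(a_∞)))^{2/(k+2)}. -/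
open Set Filter MeasureTheory
open scoped Topology

lemma monoOn_Ici_aux {f f' : ℝ → ℝ} {s₀ : ℝ}
    (hd : ∀ s ∈ Ici s₀, HasDerivAt f (f' s) s)
    (h0 : ∀ s ∈ Ici s₀, 0 ≤ f' s) : MonotoneOn f (Ici s₀) := by
  refine monotoneOn_of_hasDerivWithinAt_nonneg (convex_Ici s₀)
    (fun x hx => (hd x hx).continuousAt.continuousWithinAt)
    (fun x hx => ?_) (fun x hx => h0 x (interior_subset hx))
  exact ((hd x (interior_subset hx)).hasDerivWithinAt)

lemma tendsto_div_linear_aux {f f' : ℝ → ℝ} {L : ℝ}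
    (hd : ∀ s ∈ Ioi (0:ℝ), HasDerivAt f (f' s) s)
    (hl : Tendsto f' atTop (𝓝 L)) :
    Tendsto (fun s => f s / s) atTop (𝓝 L) := by
  rw [Metric.tendsto_atTop]
  intro ε hε
  obtain ⟨s₀, hs₀⟩ := (Metric.tendsto_atTop.1 hl) (ε/2) (by linarith)
  set t₀ : ℝ := max s₀ 1 with ht₀
  have ht₀1 : (1:ℝ) ≤ t₀ := le_max_right _ _
  have ht₀0 : (0:ℝ) < t₀ := by linarith
  have hIci : Ici t₀ ⊆ Ioi (0:ℝ) := fun x hx => lt_of_lt_of_le ht₀0 hx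
  have hclose : ∀ s ∈ Ici t₀, |f' s - L| < ε/2 := by
    intro s hs
    have := hs₀ s (le_trans (le_max_left _ _) hs)
    rwa [Real.dist_eq] at this
  -- lower bound
  have hmono₁ : MonotoneOn (fun s => f s - (L - ε/2) * s) (Ici t₀) := by
    refine monoOn_Ici_aux (f' := fun s => f' s - (L - ε/2)) (fun s hs => ?_) (fun s hs => ?_)
    · exact (hd s (hIci hs)).sub ((hasDerivAt_id s).const_mul (L - ε/2) |>.congr_deriv (by ring))
    · have := hclose s hs
      have := abs_lt.1 this
      linarith [this.1]
  have hmono₂ : MonotoneOn (fun s => (L + ε/2) * s - f s) (Ici t₀) := by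
    refine monoOn_Ici_aux (f' := fun s => (L + ε/2) - f' s) (fun s hs => ?_) (fun s hs => ?_)
    · exact ((hasDerivAt_id s).const_mul (L + ε/2) |>.congr_deriv (by ring)).sub (hd s (hIci hs))
    · have := abs_lt.1 (hclose s hs)
      linarith [this.2]
  obtain ⟨C, hC⟩ : ∃ C : ℝ, C = |f t₀| + |L| * t₀ + (ε/2) * t₀ := ⟨_, rfl⟩
  have hC0 : 0 ≤ C := by rw [hC]; positivity
  refine ⟨max t₀ (2*C/ε + 1), fun s hs => ?_⟩
  have hst₀ : t₀ ≤ s := le_trans (le_max_left _ _) hs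
  have hsC : 2*C/ε + 1 ≤ s := le_trans (le_max_right _ _) hs
  have hs0 : 0 < s := lt_of_lt_of_le ht₀0 hst₀
  have hlow := hmono₁ (self_mem_Ici) hst₀ hst₀
  have hhigh := hmono₂ (self_mem_Ici) hst₀ hst₀
  simp only at hlow hhigh
  -- f s - L * s bounds
  have habs : |f s - L * s| ≤ C + (ε/2) * s := by
    rw [abs_le]
    constructor
    · have h1 : -(|f t₀|) ≤ f t₀ := neg_abs_le _
      have h2 : -(|L| * t₀) ≤ -(L * t₀) := by
        have : L * t₀ ≤ |L| * t₀ := by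
          apply mul_le_mul_of_nonneg_right (le_abs_self L) (le_of_lt ht₀0)
        linarith
      nlinarith [hlow, hC]
    · have h1 : f t₀ ≤ |f t₀| := le_abs_self _
      have h2 : -(L * t₀) ≤ |L| * t₀ := by
        have : -L ≤ |L| := neg_le_abs L
        nlinarith [ht₀0.le]
      nlinarith [hhigh, hC]
  rw [Real.dist_eq]
  have : f s / s - L = (f s - L * s) / s := by field_simp
  rw [this, abs_div, abs_of_pos hs0]
  rw [div_lt_iff₀ hs0]
  have hCs : C / s < ε/2 := by
    rw [div_lt_iff₀ hs0]
    have : 2*C/ε < s := by linarith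
    rw [div_lt_iff₀ hε] at this
    nlinarith
  calc |f s - L * s| ≤ C + (ε/2) * s := habs
    _ < (ε/2) * s + (ε/2) * s := by
        have : C < (ε/2) * s := by
          have := (div_lt_iff₀ hs0).1 hCs
          nlinarith
        linarith
    _ = ε * s := by ring

/-- Asymptotic behavior of `g` at infinity:
`lim_{s→+∞} g(s)/s^{2/(k+2)} = ((k+2)/(2√a_∞))^{2/(k+2)}`. -/
theorem g_asymptotics_at_infinity (a : ℝ → ℝ) (ha_pos : ∀ s > (0 : ℝ), 0 < a s)
    (ha_reg : ContDiffOn ℝ 1 a (Ioi 0)) (ha_bdd : ∃ c > (0 : ℝ), ∀ s > (0 : ℝ), c ≤ a s)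
    (a_inf k : ℝ) (ha_inf : 0 < a_inf) (hk : 0 ≤ k)
    (hlim_a : Tendsto (fun s : ℝ => a s / s ^ k) atTop (𝓝 a_inf))
    (g : ℝ → ℝ) (hg : IsCauchyG a g) :
    Tendsto (fun s : ℝ => g s / s ^ (2 / (k + 2))) atTop
      (𝓝 (((k + 2) / (2 * Real.sqrt a_inf)) ^ (2 / (k + 2)))) := by
  obtain ⟨hg_cont, hg_c2, hg0, hg_pos, hg_deriv⟩ := hg
  have hk2 : (0:ℝ) < k + 2 := by linarith
  have hsqrt_pos : ∀ s > (0:ℝ), 0 < Real.sqrt (a (g s)) := fun s hs =>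
    Real.sqrt_pos.2 (ha_pos _ (hg_pos s hs))
  -- `g` is monotone on `[1, ∞)`
  have hgmono : MonotoneOn g (Ici 1) := by
    refine monoOn_Ici_aux (f' := fun s => 1 / Real.sqrt (a (g s)))
      (fun s hs => hg_deriv s (lt_of_lt_of_le one_pos hs))
      (fun s hs => le_of_lt (div_pos one_pos (hsqrt_pos s (lt_of_lt_of_le one_pos hs))))
  -- `g` tends to infinity
  have hg_top : Tendsto g atTop atTop := by
    rw [tendsto_atTop]
    intro b
    by_contra hb
    have hfreq : ∃ᶠ s in atTop, g s < b := by
      rw [Filter.not_eventually] at hb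
      exact hb.mono fun s hs => lt_of_not_ge hs
    have hball : ∀ s ≥ (1:ℝ), g s < b := by
      intro s hs
      obtain ⟨t, hlt, hge⟩ := (hfreq.and_eventually (eventually_ge_atTop s)).exists
      exact lt_of_le_of_lt (hgmono (mem_Ici.2 hs) (mem_Ici.2 (le_trans hs hge)) hge) hlt
    have hg1 : 0 < g 1 := hg_pos 1 one_pos
    have hg1b : g 1 < b := hball 1 le_rfl
    have hsub : Icc (g 1) b ⊆ Ioi (0:ℝ) := fun x hx => lt_of_lt_of_le hg1 hx.1
    obtain ⟨C, hC⟩ := (isCompact_Icc (a := g 1) (b := b)).exists_bound_of_continuousOn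
      ((ha_reg.continuousOn).mono hsub)
    have hCpos : 0 < C := by
      have h1 := hC _ (show g 1 ∈ Icc (g 1) b from ⟨le_rfl, hg1b.le⟩)
      rw [Real.norm_eq_abs] at h1
      exact lt_of_lt_of_le (ha_pos _ hg1) (le_trans (le_abs_self _) h1)
    have hsqC : 0 < Real.sqrt C := Real.sqrt_pos.2 hCpos
    have hge : ∀ s ∈ Ici (1:ℝ), 0 ≤ 1 / Real.sqrt (a (g s)) - 1 / Real.sqrt C := by
      intro s hs
      have hs0 : (0:ℝ) < s := lt_of_lt_of_le one_pos hs
      have hmem : g s ∈ Icc (g 1) b := ⟨hgmono self_mem_Ici hs hs, (hball s hs).le⟩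
      have haC : a (g s) ≤ C := by
        have := hC _ hmem; rw [Real.norm_eq_abs] at this
        exact le_trans (le_abs_self _) this
      have := one_div_le_one_div_of_le (hsqrt_pos s hs0) (Real.sqrt_le_sqrt haC)
      linarith
    have hCm : MonotoneOn (fun s => g s - s * (1/Real.sqrt C)) (Ici 1) := by
      refine monoOn_Ici_aux (f' := fun s => 1/Real.sqrt (a (g s)) - 1/Real.sqrt C)
        (fun s hs => ?_) hge
      exact (hg_deriv s (lt_of_lt_of_le one_pos hs)).sub (hasDerivAt_mul_const _)
    obtain ⟨s₁, hs₁def⟩ : ∃ s₁ : ℝ, s₁ = 1 + Real.sqrt C * (b - g 1 + 1) := ⟨_, rfl⟩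
    have hs₁ : (1:ℝ) ≤ s₁ := by nlinarith
    have hkey := hCm self_mem_Ici (mem_Ici.2 hs₁) hs₁
    simp only at hkey
    have hb' := hball s₁ hs₁
    have hexp : (s₁ - 1) * (1/Real.sqrt C) = b - g 1 + 1 := by
      rw [hs₁def]; field_simp; ring
    nlinarith [hkey, hexp]
  -- limit of `a(g s)/(g s)^k`
  have hag : Tendsto (fun s => a (g s) / (g s) ^ k) atTop (𝓝 a_inf) := hlim_a.comp hg_top
  -- derivative of `h = g ^ ((k+2)/2)`
  have hq1 : (k+2)/2 - 1 = k/2 := by ring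
  have hh_deriv : ∀ s ∈ Ioi (0:ℝ), HasDerivAt (fun s => g s ^ ((k+2)/2))
      ((k+2)/2 / Real.sqrt (a (g s) / (g s) ^ k)) s := by
    intro s hs
    have hgs : 0 < g s := hg_pos s hs
    have hsq := hsqrt_pos s hs
    have h1 := (hg_deriv s hs).rpow_const (p := (k+2)/2) (Or.inl hgs.ne')
    convert h1 using 1
    have e1 : Real.sqrt ((g s) ^ k) = (g s) ^ (k/2) := by
      rw [Real.sqrt_eq_rpow, ← Real.rpow_mul hgs.le]
      congr 1; ring
    have hgk2 : (0:ℝ) < (g s) ^ (k/2) := Real.rpow_pos_of_pos hgs _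
    rw [Real.sqrt_div (ha_pos _ hgs).le, e1, hq1]
    field_simp
  -- its limit
  have hL : Tendsto (fun s => (k+2)/2 / Real.sqrt (a (g s) / (g s) ^ k)) atTop
      (𝓝 ((k+2)/2 / Real.sqrt a_inf)) :=
    tendsto_const_nhds.div hag.sqrt (Real.sqrt_ne_zero'.2 ha_inf)
  -- average limit
  have hdivlim : Tendsto (fun s => g s ^ ((k+2)/2) / s) atTop (𝓝 ((k+2)/2 / Real.sqrt a_inf)) :=
    tendsto_div_linear_aux hh_deriv hL
  have hp0 : (0:ℝ) ≤ 2/(k+2) := by positivity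
  have hfinal := hdivlim.rpow_const (p := 2/(k+2)) (Or.inr hp0)
  have hval : ((k+2)/2 / Real.sqrt a_inf) = (k+2)/(2 * Real.sqrt a_inf) := by rw [div_div]
  rw [hval] at hfinal
  apply hfinal.congr'
  filter_upwards [eventually_gt_atTop (0:ℝ)] with s hs
  have hgs : 0 < g s := hg_pos s hs
  have hqp : (k+2)/2 * (2/(k+2)) = 1 := by field_simp
  rw [Real.div_rpow (Real.rpow_nonneg hgs.le _) hs.le, ← Real.rpow_mul hgs.le, hqp,
    Real.rpow_one]
end

section
/- Let g be the unique solution of the Cauchy problem g' = 1/√(a∘g), g(0) = 0, g > 0 on (0,∞). Then ∫₁^{+∞} f(g(s))/√(a(g(s))) ds < +∞, i.e., the function s ↦ f(g(s))/√(a(g(s))) is integrable on (1,+∞). -/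
open Set Filter MeasureTheory
open scoped Topology

/-- `∫₁^{+∞} f(g(s))/√(a(g(s))) ds < +∞`: the function `s ↦ f(g(s))/√(a(g(s)))` is
integrable on `(1,+∞)`. -/
theorem h_integrable_at_infinity (a : ℝ → ℝ) (ha_pos : ∀ s > (0 : ℝ), 0 < a s)
    (ha_reg : ContDiffOn ℝ 1 a (Ioi 0)) (ha_bdd : ∃ c > (0 : ℝ), ∀ s > (0 : ℝ), c ≤ a s)
    (f : ℝ → ℝ) (hf_pos : ∀ s > (0 : ℝ), 0 < f s) (hf_reg : ContDiffOn ℝ 1 f (Ioi 0))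
    (a_inf f_inf k p : ℝ) (ha_inf : 0 < a_inf) (hf_inf : 0 < f_inf) (hk : 0 ≤ k) (hp : 1 < p)
    (hlim_a : Tendsto (fun s : ℝ => a s / s ^ k) atTop (𝓝 a_inf))
    (hlim_f : Tendsto (fun s : ℝ => f s * s ^ p) atTop (𝓝 f_inf))
    (g : ℝ → ℝ) (hg : IsCauchyG a g) :
    IntegrableOn (fun s => f (g s) / Real.sqrt (a (g s))) (Ioi 1) := by
  obtain ⟨hg_cont, hg_smooth, hg0, hg_pos, hg_deriv⟩ := hg
  have hf_cont : ContinuousOn f (Ioi 0) := hf_reg.continuousOn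
  set c : ℝ := g 1 with hc
  have hc_pos : 0 < c := hg_pos 1 one_pos
  -- g is strictly monotone on [0,∞)
  have hg_mono : StrictMonoOn g (Ici 0) := by
    apply strictMonoOn_of_deriv_pos (convex_Ici 0) hg_cont
    intro x hx
    rw [interior_Ici] at hx
    rw [(hg_deriv x hx).deriv]
    exact one_div_pos.mpr (Real.sqrt_pos.mpr (ha_pos _ (hg_pos x hx)))
  have hg_ge : ∀ t : ℝ, 1 ≤ t → c ≤ g t := by
    intro t ht
    exact hg_mono.monotoneOn (by norm_num) (by norm_num; linarith) ht
  -- f is integrable on (c, ∞)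
  obtain ⟨T₀, hT₀⟩ := eventually_atTop.mp
    (hlim_f.eventually (eventually_le_nhds (lt_add_one f_inf)))
  set T : ℝ := max T₀ (max c 1) with hT
  have hT_pos : 0 < T := lt_of_lt_of_le one_pos (le_max_of_le_right (le_max_right _ _))
  have hcT : c ≤ T := le_max_of_le_right (le_max_left _ _)
  have hf_int : IntegrableOn f (Ioi c) := by
    have h1 : IntegrableOn f (Ioc c T) := by
      have : Icc c T ⊆ Ioi 0 := fun x hx => lt_of_lt_of_le hc_pos hx.1
      exact ((hf_cont.mono this).integrableOn_Icc).mono_set Ioc_subset_Icc_self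
    have h2 : IntegrableOn f (Ioi T) := by
      have hbound : IntegrableOn (fun x : ℝ => (f_inf + 1) * x ^ (-p)) (Ioi T) :=
        (integrableOn_Ioi_rpow_of_lt (by linarith) hT_pos).const_mul (f_inf + 1)
      refine Integrable.mono' hbound
        ((hf_cont.mono (fun x hx => lt_of_lt_of_le hT_pos (le_of_lt hx))).aestronglyMeasurable
          measurableSet_Ioi) ?_
      rw [ae_restrict_iff' measurableSet_Ioi]
      filter_upwards with x hx
      have hx0 : (0 : ℝ) < x := lt_of_le_of_lt hT_pos.le hx
      have hxp : (0 : ℝ) < x ^ p := Real.rpow_pos_of_pos hx0 p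
      have hfx : f x * x ^ p ≤ f_inf + 1 := hT₀ x (le_of_lt (lt_of_le_of_lt (le_max_left _ _) hx))
      rw [Real.norm_of_nonneg (hf_pos x hx0).le, Real.rpow_neg hx0.le,
        ← div_eq_mul_inv, le_div_iff₀ hxp]
      exact hfx
    refine (h1.union h2).mono_set ?_
    intro x hx
    rcases le_or_gt x T with h | h
    · exact Or.inl ⟨hx, h⟩
    · exact Or.inr h
  -- f nonneg on Ioi c
  have hf_nonneg : ∀ x ∈ Ioi c, 0 ≤ f x := fun x hx =>
    (hf_pos x (lt_trans hc_pos hx)).le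
  -- the primitive F of f
  set F : ℝ → ℝ := fun x => ∫ t in c..x, f t with hF
  have hII : ∀ x y : ℝ, 0 < x → 0 < y → IntervalIntegrable f volume x y := by
    intro x y hx hy
    refine (hf_cont.mono ?_).intervalIntegrable
    intro z hz
    exact lt_of_lt_of_le (lt_min hx hy) hz.1
  have hF_deriv : ∀ x : ℝ, 0 < x → HasDerivAt F (f x) x := by
    intro x hx
    refine intervalIntegral.integral_hasDerivAt_right (hII c x hc_pos hx)
      ⟨Ioi 0, Ioi_mem_nhds hx, hf_cont.aestronglyMeasurable measurableSet_Ioi⟩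
      (hf_cont.continuousAt (Ioi_mem_nhds hx))
  have hF_mono : ∀ x y : ℝ, 0 < x → x ≤ y → F x ≤ F y := by
    intro x y hx hxy
    have hy : 0 < y := lt_of_lt_of_le hx hxy
    have hsplit : F x + ∫ t in x..y, f t = F y :=
      intervalIntegral.integral_add_adjacent_intervals (hII c x hc_pos hx) (hII x y hx hy)
    have hnn : 0 ≤ ∫ t in x..y, f t := by
      apply intervalIntegral.integral_nonneg hxy
      intro u hu
      exact (hf_pos u (lt_of_lt_of_le hx hu.1)).le
    linarith
  -- the bound for F (g t), t ≥ 1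
  have hF_bdd : ∀ t : ℝ, 1 ≤ t → F (g t) ≤ ∫ x in Ioi c, f x := by
    intro t ht
    have hgt : c ≤ g t := hg_ge t ht
    rw [hF]
    simp only
    rw [intervalIntegral.integral_of_le hgt]
    apply setIntegral_mono_set hf_int
    · rw [EventuallyLE, ae_restrict_iff' measurableSet_Ioi]
      filter_upwards with x hx using hf_nonneg x hx
    · exact HasSubset.Subset.eventuallyLE Ioc_subset_Ioi_self
  -- φ = F ∘ g tends to a limit at infinity
  set φ : ℝ → ℝ := fun s => F (g s) with hφ
  set ψ : ℝ → ℝ := fun s => F (g (max 1 s)) with hψ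
  have hψ_mono : Monotone ψ := by
    intro s t hst
    have h1s : (1 : ℝ) ≤ max 1 s := le_max_left _ _
    have h1t : (1 : ℝ) ≤ max 1 t := le_max_left _ _
    have := hg_mono.monotoneOn (mem_Ici.mpr (le_trans zero_le_one (le_max_left _ _)))
      (mem_Ici.mpr (le_trans zero_le_one (le_max_left _ _)))
      (max_le_max le_rfl hst)
    exact hF_mono _ _ (hg_pos _ (lt_of_lt_of_le one_pos h1s)) this
  have hψ_bdd : BddAbove (range ψ) := by
    refine ⟨∫ x in Ioi c, f x, ?_⟩
    rintro y ⟨s, rfl⟩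
    exact hF_bdd _ (le_max_left _ _)
  have hψ_tendsto : Tendsto ψ atTop (𝓝 (⨆ s, ψ s)) := tendsto_atTop_ciSup hψ_mono hψ_bdd
  have hφ_tendsto : Tendsto φ atTop (𝓝 (⨆ s, ψ s)) := by
    refine hψ_tendsto.congr' ?_
    filter_upwards [eventually_ge_atTop (1 : ℝ)] with s hs
    rw [hψ, hφ]
    simp [max_eq_right hs]
  -- conclude
  refine integrableOn_Ioi_deriv_of_nonneg (g' := fun s => f (g s) / Real.sqrt (a (g s)))
    ?_ ?_ ?_ hφ_tendsto
  · -- continuity of φ at 1 within [1, ∞)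
    have hFc : ContinuousAt F (g 1) := (hF_deriv (g 1) hc_pos).continuousAt
    have hgc : ContinuousWithinAt g (Ici 1) 1 :=
      (hg_cont 1 (by norm_num)).mono (Ici_subset_Ici.mpr zero_le_one)
    exact hFc.comp_continuousWithinAt hgc
  · intro x hx
    have hx0 : (0 : ℝ) < x := lt_trans one_pos hx
    have h := (hF_deriv (g x) (hg_pos x hx0)).comp x (hg_deriv x hx0)
    rw [mul_one_div] at h
    exact h
  · intro x hx
    have hx0 : (0 : ℝ) < x := lt_trans one_pos hx
    exact div_nonneg (hf_pos _ (hg_pos x hx0)).le (Real.sqrt_nonneg _)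
end

section
/- Let g be the unique solution of the Cauchy problem g' = 1/√(a∘g), g(0) = 0, g > 0 on (0,∞). Assume f is integrable on (M,∞) for every M > 0. Then lim_{s→0⁺} (∫_{g(s)}^{+∞} f(ξ)dξ) / s^{(1−γ)/(1−μ)} = f₀ · a₀^{(γ−1)/(2(1−μ))} · (γ−1)^{−1} · (1−μ)^{−(γ−1)/(1−μ)}. -/
open Set Filter MeasureTheory
open scoped Topology

lemma rpow_tendsto_zero {q : ℝ} (hq : 0 < q) :
    Tendsto (fun t : ℝ => t ^ q) (𝓝[>] 0) (𝓝 0) := by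
  have h := (Real.continuousAt_rpow_const 0 q (Or.inr hq.le)).tendsto
  rw [Real.zero_rpow hq.ne'] at h
  exact h.mono_left nhdsWithin_le_nhds

lemma tail_asymp (f : ℝ → ℝ) (hf_pos : ∀ s > (0:ℝ), 0 < f s) (f₀ γ : ℝ)
    (hγ : 1 < γ)
    (hlim_f : Tendsto (fun s : ℝ => f s * s ^ γ) (𝓝[>] 0) (𝓝 f₀))
    (hf_int : ∀ M > (0:ℝ), IntegrableOn f (Ioi M)) :
    Tendsto (fun t : ℝ => (∫ ξ in Ioi t, f ξ) * t ^ (γ - 1)) (𝓝[>] 0)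
      (𝓝 (f₀ / (γ - 1))) := by
  have hγ1 : (0:ℝ) < γ - 1 := by linarith
  have hpow0 := rpow_tendsto_zero hγ1
  have key : ∀ ε > (0:ℝ), ∃ lo hi : ℝ → ℝ,
      Tendsto lo (𝓝[>] 0) (𝓝 ((f₀ - ε) / (γ - 1))) ∧
      Tendsto hi (𝓝[>] 0) (𝓝 ((f₀ + ε) / (γ - 1))) ∧
      ∀ᶠ t in 𝓝[>] (0:ℝ),
        lo t ≤ (∫ ξ in Ioi t, f ξ) * t ^ (γ - 1) ∧
        (∫ ξ in Ioi t, f ξ) * t ^ (γ - 1) ≤ hi t := by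
    intro ε hε
    obtain ⟨δ₀, hδ₀, hδb⟩ := Metric.tendsto_nhdsWithin_nhds.mp hlim_f ε hε
    set δ := δ₀ / 2 with hδdef
    have hδpos : 0 < δ := by positivity
    set C := ∫ ξ in Ioi δ, f ξ with hC
    have hCpos : 0 ≤ C :=
      setIntegral_nonneg measurableSet_Ioi (fun ξ hξ => (hf_pos ξ (hδpos.trans hξ)).le)
    refine ⟨fun t => (f₀ - ε) * ((1 - δ ^ (1 - γ) * t ^ (γ - 1)) / (γ - 1)),
        fun t => (f₀ + ε) * ((1 - δ ^ (1 - γ) * t ^ (γ - 1)) / (γ - 1)) + C * t ^ (γ - 1),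
        ?_, ?_, ?_⟩
    · have h1 : Tendsto (fun t : ℝ => (f₀ - ε) * ((1 - δ ^ (1 - γ) * t ^ (γ - 1)) / (γ - 1)))
          (𝓝[>] 0) (𝓝 ((f₀ - ε) * ((1 - δ ^ (1 - γ) * 0) / (γ - 1)))) :=
        ((tendsto_const_nhds.sub (hpow0.const_mul _)).div_const _).const_mul _
      simpa [mul_one_div, div_eq_mul_inv] using h1
    · have h1 : Tendsto (fun t : ℝ =>
            (f₀ + ε) * ((1 - δ ^ (1 - γ) * t ^ (γ - 1)) / (γ - 1)) + C * t ^ (γ - 1))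
          (𝓝[>] 0) (𝓝 ((f₀ + ε) * ((1 - δ ^ (1 - γ) * 0) / (γ - 1)) + C * 0)) :=
        (((tendsto_const_nhds.sub (hpow0.const_mul _)).div_const _).const_mul _).add
          (hpow0.const_mul _)
      simpa [mul_one_div, div_eq_mul_inv] using h1
    · filter_upwards [Ioo_mem_nhdsGT_of_mem ⟨le_refl (0:ℝ), hδpos⟩] with t ht
      have ht0 : 0 < t := ht.1
      have htδ : t ≤ δ := ht.2.le
      have h0u : (0:ℝ) ∉ Set.uIcc t δ := by
        rw [Set.uIcc_of_le htδ, mem_Icc]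
        push_neg
        intro h; linarith
      have hfi1 : IntegrableOn f (Ioc t δ) :=
        (hf_int t ht0).mono_set Ioc_subset_Ioi_self
      have hfi2 : IntegrableOn f (Ioi δ) := hf_int δ hδpos
      have hri : IntegrableOn (fun ξ : ℝ => ξ ^ (-γ)) (Ioc t δ) :=
        (intervalIntegral.intervalIntegrable_rpow (Or.inr h0u)).1
      have hsplit : (∫ ξ in Ioi t, f ξ) = (∫ ξ in Ioc t δ, f ξ) + C := by
        rw [← Ioc_union_Ioi_eq_Ioi htδ,
          setIntegral_union (Ioc_disjoint_Ioi le_rfl) measurableSet_Ioi hfi1 hfi2]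
      have hJ : (∫ ξ in Ioc t δ, (ξ:ℝ) ^ (-γ)) = (t ^ (1-γ) - δ ^ (1-γ)) / (γ - 1) := by
        rw [← intervalIntegral.integral_of_le htδ,
          integral_rpow (Or.inr ⟨by intro h; apply absurd (neg_injective h); linarith, h0u⟩)]
        have he : -γ + 1 = 1 - γ := by ring
        rw [he, div_eq_div_iff (by linarith : (1:ℝ) - γ ≠ 0) (by linarith : γ - 1 ≠ 0)]
        ring
      have hptwise : ∀ ξ ∈ Ioc t δ,
          (f₀ - ε) * ξ ^ (-γ) ≤ f ξ ∧ f ξ ≤ (f₀ + ε) * ξ ^ (-γ) := by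
        intro ξ hξ
        have hξ0 : 0 < ξ := ht0.trans hξ.1
        have hd : dist (f ξ * ξ ^ γ) f₀ < ε := by
          refine hδb (mem_Ioi.mpr hξ0) ?_
          rw [Real.dist_eq, sub_zero, abs_of_pos hξ0]
          calc ξ ≤ δ := hξ.2
          _ < δ₀ := by rw [hδdef]; linarith
        rw [Real.dist_eq, abs_lt] at hd
        have h1 : ξ ^ γ * ξ ^ (-γ) = 1 := by
          rw [← Real.rpow_add hξ0]; simp
        have hrn : (0:ℝ) ≤ ξ ^ (-γ) := Real.rpow_nonneg hξ0.le _
        constructor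
        · calc (f₀ - ε) * ξ ^ (-γ) ≤ (f ξ * ξ ^ γ) * ξ ^ (-γ) :=
              mul_le_mul_of_nonneg_right (by linarith) hrn
          _ = f ξ := by rw [mul_assoc, h1, mul_one]
        · calc f ξ = (f ξ * ξ ^ γ) * ξ ^ (-γ) := by rw [mul_assoc, h1, mul_one]
          _ ≤ (f₀ + ε) * ξ ^ (-γ) := mul_le_mul_of_nonneg_right (by linarith) hrn
      have hlow : (f₀ - ε) * ((t ^ (1-γ) - δ ^ (1-γ)) / (γ - 1)) ≤ ∫ ξ in Ioc t δ, f ξ := by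
        rw [← hJ, ← MeasureTheory.integral_const_mul]
        exact setIntegral_mono_on (hri.const_mul _) hfi1 measurableSet_Ioc
          (fun ξ hξ => (hptwise ξ hξ).1)
      have hup : (∫ ξ in Ioc t δ, f ξ) ≤ (f₀ + ε) * ((t ^ (1-γ) - δ ^ (1-γ)) / (γ - 1)) := by
        rw [← hJ, ← MeasureTheory.integral_const_mul]
        exact setIntegral_mono_on hfi1 (hri.const_mul _) measurableSet_Ioc
          (fun ξ hξ => (hptwise ξ hξ).2)
      have htt : t ^ (1-γ) * t ^ (γ-1) = 1 := by
        rw [← Real.rpow_add ht0]; norm_num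
      have htn : (0:ℝ) ≤ t ^ (γ-1) := Real.rpow_nonneg ht0.le _
      constructor
      · have h2 : ((f₀ - ε) * ((t ^ (1-γ) - δ ^ (1-γ)) / (γ - 1))) * t ^ (γ-1)
            ≤ (∫ ξ in Ioi t, f ξ) * t ^ (γ-1) := by
          rw [hsplit]
          refine mul_le_mul_of_nonneg_right ?_ htn
          linarith
        calc (f₀ - ε) * ((1 - δ ^ (1 - γ) * t ^ (γ - 1)) / (γ - 1))
            = ((f₀ - ε) * ((t ^ (1-γ) - δ ^ (1-γ)) / (γ - 1))) * t ^ (γ-1) := by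
              linear_combination (-(f₀ - ε) / (γ - 1)) * htt
          _ ≤ _ := h2
      · have h2 : (∫ ξ in Ioi t, f ξ) * t ^ (γ-1)
            ≤ ((f₀ + ε) * ((t ^ (1-γ) - δ ^ (1-γ)) / (γ - 1)) + C) * t ^ (γ-1) := by
          rw [hsplit]
          exact mul_le_mul_of_nonneg_right (by linarith) htn
        calc (∫ ξ in Ioi t, f ξ) * t ^ (γ-1) ≤ _ := h2
          _ = (f₀ + ε) * ((1 - δ ^ (1 - γ) * t ^ (γ - 1)) / (γ - 1)) + C * t ^ (γ-1) := by
              linear_combination ((f₀ + ε) / (γ - 1)) * htt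
  rw [tendsto_order]
  constructor
  · intro b hb
    have hb' : b * (γ - 1) < f₀ := (lt_div_iff₀ hγ1).mp hb
    have hε : (0:ℝ) < (f₀ - b * (γ - 1)) / 2 := by linarith
    obtain ⟨lo, hi, hlo, _, hev⟩ := key _ hε
    have hblt : b < (f₀ - (f₀ - b * (γ - 1)) / 2) / (γ - 1) := by
      rw [lt_div_iff₀ hγ1]; linarith
    filter_upwards [hlo.eventually_const_lt hblt, hev] with t h1 h2
    exact h1.trans_le h2.1
  · intro b hb
    have hb' : f₀ < b * (γ - 1) := (div_lt_iff₀ hγ1).mp hb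
    have hε : (0:ℝ) < (b * (γ - 1) - f₀) / 2 := by linarith
    obtain ⟨lo, hi, _, hhi, hev⟩ := key _ hε
    have hblt : (f₀ + (b * (γ - 1) - f₀) / 2) / (γ - 1) < b := by
      rw [div_lt_iff₀ hγ1]; linarith
    filter_upwards [hhi.eventually_lt_const hblt, hev] with t h1 h2
    exact h2.2.trans_lt h1

lemma g_pow_asymp (a : ℝ → ℝ) (ha_pos : ∀ s > (0 : ℝ), 0 < a s)
    (a₀ μ : ℝ) (ha₀ : 0 < a₀) (hμ₁ : μ < 1)
    (hlim_a : Tendsto (fun s : ℝ => a s * s ^ (2 * μ)) (𝓝[>] 0) (𝓝 a₀))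
    (g : ℝ → ℝ) (hg : IsCauchyG a g)
    (hg0 : Tendsto g (𝓝[>] 0) (𝓝[>] 0)) :
    Tendsto (fun s : ℝ => g s ^ (1 - μ) / s) (𝓝[>] 0)
      (𝓝 ((1 - μ) * (Real.sqrt a₀)⁻¹)) := by
  obtain ⟨hgc, hgC2, hg00, hgpos, hgder⟩ := hg
  have h1μ : (0:ℝ) < 1 - μ := by linarith
  set F' : ℝ → ℝ := fun s => 1 / Real.sqrt (a (g s)) * (1 - μ) * g s ^ ((1 - μ) - 1) with hF'
  have hff' : ∀ᶠ s in 𝓝[>] (0:ℝ), HasDerivAt (fun x => g x ^ (1 - μ)) (F' s) s := by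
    filter_upwards [self_mem_nhdsWithin] with s hs
    exact (hgder s hs).rpow_const (Or.inl (hgpos s hs).ne')
  have hgg' : ∀ᶠ s in 𝓝[>] (0:ℝ), HasDerivAt (fun x : ℝ => x) ((fun _ : ℝ => (1:ℝ)) s) s := by
    filter_upwards with s; exact hasDerivAt_id s
  have hg' : ∀ᶠ s in 𝓝[>] (0:ℝ), (fun _ : ℝ => (1:ℝ)) s ≠ 0 := by
    filter_upwards with s; norm_num
  have hg0' : Tendsto g (𝓝[>] 0) (𝓝 0) := hg0.mono_right nhdsWithin_le_nhds
  have hfa : Tendsto (fun s => g s ^ (1 - μ)) (𝓝[>] (0:ℝ)) (𝓝 0) := by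
    have hc := (Real.continuousAt_rpow_const 0 (1 - μ) (Or.inr h1μ.le)).tendsto
    rw [Real.zero_rpow h1μ.ne'] at hc
    exact hc.comp hg0'
  have hga : Tendsto (fun s : ℝ => s) (𝓝[>] (0:ℝ)) (𝓝 0) :=
    tendsto_id.mono_right nhdsWithin_le_nhds
  have hdiv : Tendsto (fun s => F' s / (fun _ : ℝ => (1:ℝ)) s) (𝓝[>] (0:ℝ))
      (𝓝 ((1 - μ) * (Real.sqrt a₀)⁻¹)) := by
    have hcomp : Tendsto (fun s => a (g s) * g s ^ (2 * μ)) (𝓝[>] (0:ℝ)) (𝓝 a₀) :=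
      hlim_a.comp hg0
    have hsq : Tendsto (fun s => Real.sqrt (a (g s) * g s ^ (2 * μ))) (𝓝[>] (0:ℝ))
        (𝓝 (Real.sqrt a₀)) := (Real.continuous_sqrt.tendsto a₀).comp hcomp
    have hinv : Tendsto (fun s => (Real.sqrt (a (g s) * g s ^ (2 * μ)))⁻¹) (𝓝[>] (0:ℝ))
        (𝓝 ((Real.sqrt a₀)⁻¹)) := hsq.inv₀ (Real.sqrt_pos.mpr ha₀).ne'
    have hmain : Tendsto (fun s => (1 - μ) * (Real.sqrt (a (g s) * g s ^ (2 * μ)))⁻¹)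
        (𝓝[>] (0:ℝ)) (𝓝 ((1 - μ) * (Real.sqrt a₀)⁻¹)) := hinv.const_mul _
    refine hmain.congr' ?_
    filter_upwards [self_mem_nhdsWithin] with s hs
    have hGs : 0 < g s := hgpos s hs
    have hAs : 0 < a (g s) := ha_pos _ hGs
    have h2μ : g s ^ (2 * μ) = (g s ^ μ) ^ 2 := by
      rw [sq, ← Real.rpow_add hGs, two_mul]
    have hsqrt : Real.sqrt (a (g s) * g s ^ (2 * μ))
        = Real.sqrt (a (g s)) * g s ^ μ := by
      rw [h2μ, Real.sqrt_mul hAs.le, Real.sqrt_sq (Real.rpow_nonneg hGs.le μ)]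
    rw [hsqrt, mul_inv, hF']
    simp only [div_eq_mul_inv, one_mul]
    rw [show (1 - μ) - 1 = -μ by ring, Real.rpow_neg hGs.le]
    ring
  have := HasDerivAt.lhopital_zero_nhdsGT hff' hgg' hg' hfa hga hdiv
  exact this

/-- Asymptotic behavior of `∫_{g(s)}^{+∞} f(ξ) dξ` at the origin:
`lim_{s→0⁺} (∫_{g(s)}^{+∞} f)/s^{(1−γ)/(1−μ)}
  = f₀ a₀^{(γ−1)/(2(1−μ))} (γ−1)⁻¹ (1−μ)^{−(γ−1)/(1−μ)}`. -/
theorem integral_tail_asymptotics (a : ℝ → ℝ) (ha_pos : ∀ s > (0 : ℝ), 0 < a s)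
    (ha_reg : ContDiffOn ℝ 1 a (Ioi 0)) (ha_bdd : ∃ c > (0 : ℝ), ∀ s > (0 : ℝ), c ≤ a s)
    (f : ℝ → ℝ) (hf_pos : ∀ s > (0 : ℝ), 0 < f s) (hf_reg : ContDiffOn ℝ 1 f (Ioi 0))
    (a₀ f₀ μ γ : ℝ) (ha₀ : 0 < a₀) (hf₀ : 0 < f₀) (hμ₀ : 0 ≤ μ) (hμ₁ : μ < 1) (hγ : 1 < γ)
    (hlim_a : Tendsto (fun s : ℝ => a s * s ^ (2 * μ)) (𝓝[>] 0) (𝓝 a₀))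
    (hlim_f : Tendsto (fun s : ℝ => f s * s ^ γ) (𝓝[>] 0) (𝓝 f₀))
    (hf_int : ∀ M > (0 : ℝ), IntegrableOn f (Ioi M))
    (g : ℝ → ℝ) (hg : IsCauchyG a g) :
    Tendsto (fun s : ℝ => (∫ ξ in Ioi (g s), f ξ) / s ^ ((1 - γ) / (1 - μ))) (𝓝[>] 0)
      (𝓝 (f₀ * a₀ ^ ((γ - 1) / (2 * (1 - μ))) * (γ - 1)⁻¹ *
        (1 - μ) ^ (-(γ - 1) / (1 - μ)))) := by
  have h1μ : (0:ℝ) < 1 - μ := by linarith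
  have hg0 : Tendsto g (𝓝[>] 0) (𝓝[>] 0) := by
    rw [tendsto_nhdsWithin_iff]
    constructor
    · have h := hg.1 0 self_mem_Ici
      have h' : Tendsto g (𝓝[Ici 0] 0) (𝓝 0) := by
        have ht := h.tendsto; rwa [hg.2.2.1] at ht
      exact h'.mono_left (nhdsWithin_mono _ Ioi_subset_Ici_self)
    · filter_upwards [self_mem_nhdsWithin] with s hs
      exact hg.2.2.2.1 s hs
  have hA := tail_asymp f hf_pos f₀ γ hγ hlim_f hf_int
  have hB := g_pow_asymp a ha_pos a₀ μ ha₀ hμ₁ hlim_a g hg hg0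
  set q : ℝ := (1 - γ) / (1 - μ) with hq
  set c : ℝ := (1 - μ) * (Real.sqrt a₀)⁻¹ with hc
  have hcpos : 0 < c := by
    apply mul_pos h1μ
    exact inv_pos.mpr (Real.sqrt_pos.mpr ha₀)
  have hfac1 : Tendsto (fun s : ℝ => (∫ ξ in Ioi (g s), f ξ) * g s ^ (γ - 1)) (𝓝[>] 0)
      (𝓝 (f₀ / (γ - 1))) := hA.comp hg0
  have hfac2 : Tendsto (fun s : ℝ => (g s ^ (1 - μ) / s) ^ q) (𝓝[>] 0)
      (𝓝 (c ^ q)) := hB.rpow_const (Or.inl hcpos.ne')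
  have hmul := hfac1.mul hfac2
  have heq : f₀ / (γ - 1) * c ^ q
      = f₀ * a₀ ^ ((γ - 1) / (2 * (1 - μ))) * (γ - 1)⁻¹ * (1 - μ) ^ (-(γ - 1) / (1 - μ)) := by
    have e1 : -(γ - 1) / (1 - μ) = q := by rw [hq]; ring
    have e2 : (γ - 1) / (2 * (1 - μ)) = -(1 / 2 * q) := by
      rw [hq]; field_simp; ring
    rw [e1, e2, hc, Real.mul_rpow h1μ.le (by positivity),
      Real.inv_rpow (Real.sqrt_nonneg _), Real.sqrt_eq_rpow, ← Real.rpow_mul ha₀.le,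
      ← Real.rpow_neg ha₀.le]
    ring
  rw [← heq]
  refine hmul.congr' ?_
  filter_upwards [self_mem_nhdsWithin] with s hs
  have hs0 : (0:ℝ) < s := hs
  have hG : 0 < g s := hg.2.2.2.1 s hs
  have e3 : (g s ^ (1 - μ) / s) ^ q = g s ^ (1 - γ) / s ^ q := by
    rw [Real.div_rpow (Real.rpow_nonneg hG.le _) hs0.le, ← Real.rpow_mul hG.le]
    congr 1
    rw [hq]
    field_simp
  rw [e3]
  have e4 : g s ^ (γ - 1) * (g s ^ (1 - γ) / s ^ q)
      = (g s ^ (γ - 1) * g s ^ (1 - γ)) / s ^ q := by ring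
  rw [mul_assoc, e4, ← Real.rpow_add hG]
  norm_num
  ring
end

section
/- Let g be the unique solution of the Cauchy problem g' = 1/√(a∘g), g(0) = 0, g > 0 on (0,∞). Then for every ℓ ≥ 0 there exists a unique φ ∈ C([0,∞)) ∩ C²((0,∞)) such that φ'(s) = √(ℓ² + 2∫_{g(φ(s))}^{+∞} f(ξ)dξ) for all s > 0, φ(0) = 0, φ(s) > 0 for all s > 0, lim_{s→+∞} φ'(s) = ℓ, and lim_{s→+∞} φ(s) = +∞. -/
open Set Filter MeasureTheory
open scoped Topology

/-- `φ` solves the first-order problem `φ'(s) = √(ℓ² + 2∫_{g(φ(s))}^{+∞} f(ξ)dξ)` for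
`s > 0`, with `φ(0) = 0`, `φ > 0` on `(0,∞)`, `φ ∈ C([0,∞)) ∩ C²((0,∞))`,
`lim_{s→+∞} φ'(s) = ℓ` and `lim_{s→+∞} φ(s) = +∞`. -/
def IsPhi (a f : ℝ → ℝ) (g : ℝ → ℝ) (ℓ : ℝ) (φ : ℝ → ℝ) : Prop :=
  ContinuousOn φ (Ici 0) ∧ ContDiffOn ℝ 2 φ (Ioi 0) ∧ φ 0 = 0 ∧
  (∀ s > (0 : ℝ), 0 < φ s) ∧
  (∀ s > (0 : ℝ),
    HasDerivAt φ (Real.sqrt (ℓ ^ 2 + 2 * ∫ ξ in Ioi (g (φ s)), f ξ)) s) ∧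
  Tendsto (deriv φ) atTop (𝓝 ℓ) ∧ Tendsto φ atTop atTop

section Aux

lemma intF (f : ℝ → ℝ) (p f_inf : ℝ) (hp : 1 < p)
    (hf_pos : ∀ s > (0:ℝ), 0 < f s) (hfc : ContinuousOn f (Ioi 0))
    (hlim : Tendsto (fun s : ℝ => f s * s ^ p) atTop (𝓝 f_inf)) :
    ∀ x > (0:ℝ), IntegrableOn f (Ioi x) := by
  have hev : ∀ᶠ s : ℝ in atTop, f s * s ^ p ≤ f_inf + 1 :=
    hlim.eventually_le_const (lt_add_one f_inf)
  obtain ⟨M₀, hM₀⟩ := eventually_atTop.1 hev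
  intro x hx
  set M : ℝ := max M₀ (max x 1) with hM
  have hM1 : (1:ℝ) ≤ M := le_trans (le_max_right x 1) (le_max_right _ _)
  have hMpos : (0:ℝ) < M := lt_of_lt_of_le one_pos hM1
  have hxM : x ≤ M := le_trans (le_max_left x 1) (le_max_right _ _)
  have h1 : IntegrableOn f (Ioi M) := by
    have hbase : IntegrableOn (fun t : ℝ => t ^ (-p)) (Ioi M) :=
      integrableOn_Ioi_rpow_of_lt (by linarith) hMpos
    have hbase' : IntegrableOn (fun t : ℝ => (f_inf + 1) * t ^ (-p)) (Ioi M) :=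
      hbase.const_mul _
    refine Integrable.mono' hbase' (hfc.mono (fun t ht => lt_of_lt_of_le hMpos (le_of_lt ht)) |>.aestronglyMeasurable measurableSet_Ioi) ?_
    refine (ae_restrict_iff' measurableSet_Ioi).2 (ae_of_all _ fun s hs => ?_)
    have hs0 : (0:ℝ) < s := lt_trans hMpos hs
    have hsp : (0:ℝ) < s ^ p := Real.rpow_pos_of_pos hs0 p
    have hb : f s * s ^ p ≤ f_inf + 1 := hM₀ s (le_trans (le_max_left _ _) (le_of_lt hs))
    have : f s ≤ (f_inf + 1) * (s ^ p)⁻¹ := by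
      rw [le_mul_inv_iff₀ hsp]
      nlinarith
    rw [Real.norm_eq_abs, abs_of_nonneg (le_of_lt (hf_pos s hs0)), Real.rpow_neg (le_of_lt hs0)]
    exact this
  have h2 : IntegrableOn f (Ioc x M) := by
    have : IntegrableOn f (Icc x M) :=
      (hfc.mono (fun t ht => lt_of_lt_of_le hx ht.1)).integrableOn_Icc
    exact this.mono_set Ioc_subset_Icc_self
  have := h2.union h1
  rwa [Ioc_union_Ioi_eq_Ioi hxM] at this


variable {f : ℝ → ℝ}

lemma F_eq (hint : ∀ x > (0:ℝ), IntegrableOn f (Ioi x)) :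
    ∀ x > (0:ℝ), ∀ y > (0:ℝ),
      (∫ ξ in Ioi x, f ξ) = (∫ t in x..y, f t) + ∫ ξ in Ioi y, f ξ := by
  have key : ∀ x > (0:ℝ), ∀ y > (0:ℝ), x ≤ y →
      (∫ ξ in Ioi x, f ξ) = (∫ t in x..y, f t) + ∫ ξ in Ioi y, f ξ := by
    intro x hx y hy hxy
    rw [intervalIntegral.integral_of_le hxy,
      ← setIntegral_union (Ioc_disjoint_Ioi le_rfl) measurableSet_Ioi
        ((hint x hx).mono_set Ioc_subset_Ioi_self) (hint y hy),
      Ioc_union_Ioi_eq_Ioi hxy]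
  intro x hx y hy
  rcases le_total x y with h | h
  · exact key x hx y hy h
  · have := key y hy x hx h
    rw [intervalIntegral.integral_symm]
    linarith
lemma F_hasDeriv (hfc : ContinuousOn f (Ioi 0))
    (hint : ∀ x > (0:ℝ), IntegrableOn f (Ioi x)) :
    ∀ x > (0:ℝ), HasDerivAt (fun x => ∫ ξ in Ioi x, f ξ) (-f x) x := by
  intro x hx
  have hx1 : (0:ℝ) < x + 1 := by linarith
  have hii : IntervalIntegrable f volume x (x + 1) := by
    rw [intervalIntegrable_iff_integrableOn_Ioc_of_le (by linarith)]
    exact (hint x hx).mono_set Ioc_subset_Ioi_self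
  have hd : HasDerivAt (fun u => (∫ t in u..(x+1), f t) + ∫ ξ in Ioi (x+1), f ξ) (-f x) x := by
    have := intervalIntegral.integral_hasDerivAt_left hii
      (hfc.stronglyMeasurableAtFilter isOpen_Ioi x hx) (hfc.continuousAt (isOpen_Ioi.mem_nhds hx))
    simpa using this.add_const (∫ ξ in Ioi (x+1), f ξ)
  refine hd.congr_of_eventuallyEq ?_
  filter_upwards [isOpen_Ioi.mem_nhds hx] with u hu
  exact F_eq hint u hu (x+1) hx1
lemma F_nonneg (hf_pos : ∀ s > (0:ℝ), 0 < f s) :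
    ∀ x ≥ (0:ℝ), 0 ≤ ∫ ξ in Ioi x, f ξ := fun x hx =>
  setIntegral_nonneg measurableSet_Ioi fun ξ hξ => (hf_pos ξ (lt_of_le_of_lt hx hξ)).le
lemma F_anti (hf_pos : ∀ s > (0:ℝ), 0 < f s)
    (hint : ∀ x > (0:ℝ), IntegrableOn f (Ioi x)) :
    ∀ x > (0:ℝ), ∀ y, x ≤ y → (∫ ξ in Ioi y, f ξ) ≤ ∫ ξ in Ioi x, f ξ := by
  intro x hx y hxy
  have hy : (0:ℝ) < y := lt_of_lt_of_le hx hxy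
  rw [F_eq hint x hx y hy]
  have : 0 ≤ ∫ t in x..y, f t :=
    intervalIntegral.integral_nonneg hxy fun u hu => (hf_pos u (lt_of_lt_of_le hx hu.1)).le
  linarith
lemma F_pos (hf_pos : ∀ s > (0:ℝ), 0 < f s) (hfc : ContinuousOn f (Ioi 0))
    (hint : ∀ x > (0:ℝ), IntegrableOn f (Ioi x)) :
    ∀ x > (0:ℝ), 0 < ∫ ξ in Ioi x, f ξ := by
  intro x hx
  have hx1 : (0:ℝ) < x + 1 := by linarith
  rw [F_eq hint x hx (x+1) hx1]
  have hii : IntervalIntegrable f volume x (x + 1) := by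
    rw [intervalIntegrable_iff_integrableOn_Ioc_of_le (by linarith)]
    exact (hint x hx).mono_set Ioc_subset_Ioi_self
  have h1 : 0 < ∫ t in x..(x+1), f t :=
    intervalIntegral.intervalIntegral_pos_of_pos_on hii
      (fun u hu => hf_pos u (lt_trans hx hu.1)) (by linarith)
  have h2 := F_nonneg hf_pos (x+1) hx1.le
  linarith
lemma F_tend (hint : ∀ x > (0:ℝ), IntegrableOn f (Ioi x)) :
    Tendsto (fun x => ∫ ξ in Ioi x, f ξ) atTop (𝓝 0) := by
  have h1 : Tendsto (fun x : ℝ => ∫ t in (1:ℝ)..x, f t) atTop (𝓝 (∫ ξ in Ioi 1, f ξ)) :=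
    intervalIntegral_tendsto_integral_Ioi 1 (hint 1 one_pos) tendsto_id
  have h2 : Tendsto (fun x : ℝ => (∫ ξ in Ioi 1, f ξ) - ∫ t in (1:ℝ)..x, f t) atTop
      (𝓝 ((∫ ξ in Ioi 1, f ξ) - ∫ ξ in Ioi 1, f ξ)) := tendsto_const_nhds.sub h1
  rw [sub_self] at h2
  refine h2.congr' ?_
  filter_upwards [eventually_ge_atTop (1:ℝ)] with x hx
  have := F_eq hint 1 one_pos x (lt_of_lt_of_le one_pos hx)
  linarith

variable {a g : ℝ → ℝ}

lemma g_mono (ha_pos : ∀ s > (0:ℝ), 0 < a s) (hg : IsCauchyG a g) :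
    StrictMonoOn g (Ici 0) := by
  refine strictMonoOn_of_deriv_pos (convex_Ici 0) hg.1 fun x hx => ?_
  rw [interior_Ici] at hx
  rw [(hg.2.2.2.2 x hx).deriv]
  have := ha_pos _ (hg.2.2.2.1 x hx)
  positivity

lemma g_top (ha_pos : ∀ s > (0:ℝ), 0 < a s) (ha_cont : ContinuousOn a (Ioi 0))
    (hg : IsCauchyG a g) : Tendsto g atTop atTop := by
  have hmono : MonotoneOn g (Ici 0) := (g_mono ha_pos hg).monotoneOn
  by_cases hb : ∀ M, ∃ s, 1 ≤ s ∧ M ≤ g s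
  · rw [tendsto_atTop]
    intro M
    obtain ⟨s₀, hs₀1, hs₀⟩ := hb M
    filter_upwards [eventually_ge_atTop s₀] with s hs
    exact le_trans hs₀ (hmono (le_trans zero_le_one hs₀1)
      (le_trans (le_trans zero_le_one hs₀1) hs) hs)
  · exfalso
    push_neg at hb
    obtain ⟨M, hM⟩ := hb
    have hg1 : 0 < g 1 := hg.2.2.2.1 1 one_pos
    have hg1M : g 1 < M := hM 1 le_rfl
    -- bound a on Icc (g 1) M
    obtain ⟨A, hA⟩ : ∃ A, ∀ x ∈ Icc (g 1) M, a x ≤ A := by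
      obtain ⟨A, hA⟩ := (isCompact_Icc (a := g 1) (b := M)).exists_bound_of_continuousOn
        (ha_cont.mono fun x hx => lt_of_lt_of_le hg1 hx.1)
      exact ⟨A, fun x hx => le_trans (le_abs_self _) (by simpa [Real.norm_eq_abs] using hA x hx)⟩
    set A' : ℝ := max A 1 with hA'
    have hA'0 : (0:ℝ) < A' := lt_of_lt_of_le one_pos (le_max_right _ _)
    set c : ℝ := (Real.sqrt A')⁻¹ with hc
    have hc0 : 0 < c := by positivity
    have hgmem : ∀ s, 1 ≤ s → g s ∈ Icc (g 1) M := fun s hs =>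
      ⟨hmono (mem_Ici.2 (le_trans zero_le_one le_rfl)) (mem_Ici.2 (le_trans zero_le_one hs)) hs, (hM s hs).le⟩
    have hderiv : ∀ s, 1 ≤ s → c ≤ 1 / Real.sqrt (a (g s)) := by
      intro s hs
      have h1 : a (g s) ≤ A' := le_trans (hA _ (hgmem s hs)) (le_max_left _ _)
      have h2 : 0 < a (g s) := ha_pos _ (hg.2.2.2.1 s (lt_of_lt_of_le one_pos hs))
      rw [hc, one_div]
      exact inv_anti₀ (Real.sqrt_pos.2 h2) (Real.sqrt_le_sqrt h1)
    have hmonou : MonotoneOn (fun s => g s - c * s) (Ici 1) := by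
      refine monotoneOn_of_deriv_nonneg (convex_Ici 1)
        ((hg.1.mono (Ici_subset_Ici.2 zero_le_one)).sub (continuous_const.mul continuous_id).continuousOn)
        (fun x hx => ?_) (fun x hx => ?_)
      · rw [interior_Ici] at hx
        have hx1 : (1:ℝ) ≤ x := hx.le
        exact ((hg.2.2.2.2 x (lt_of_lt_of_le one_pos hx1)).sub
          ((hasDerivAt_id x).const_mul c)).differentiableAt.differentiableWithinAt
      · rw [interior_Ici] at hx
        have hx1 : (1:ℝ) ≤ x := hx.le
        have hd : HasDerivAt (fun s => g s - c * s) (1 / Real.sqrt (a (g x)) - c * 1) x := by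
          exact (hg.2.2.2.2 x (lt_of_lt_of_le one_pos hx1)).sub ((hasDerivAt_id x).const_mul c)
        rw [hd.deriv]
        have := hderiv x hx1
        simp only [mul_one]
        linarith
    obtain ⟨s₁, hs₁⟩ : ∃ s₁ : ℝ, s₁ = 1 + (M - g 1 + 1) / c := ⟨_, rfl⟩
    have hdiv : 0 ≤ (M - g 1 + 1) / c := div_nonneg (by linarith) hc0.le
    have hs₁1 : (1:ℝ) ≤ s₁ := by rw [hs₁]; linarith
    have hstep : g 1 - c * 1 ≤ g s₁ - c * s₁ := hmonou self_mem_Ici (mem_Ici.2 hs₁1) hs₁1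
    have hMs : g s₁ < M := hM s₁ hs₁1
    have hcc : c * s₁ = c + (M - g 1 + 1) := by
      rw [hs₁]; field_simp
    nlinarith [hc0, hg1]

end Aux

/-- For every `ℓ ≥ 0` there exists a unique solution `φ` of the first-order
problem (unique as a function on `[0,∞)`). -/
theorem phi_existence_uniqueness (a : ℝ → ℝ) (ha_pos : ∀ s > (0 : ℝ), 0 < a s)
    (ha_reg : ContDiffOn ℝ 1 a (Ioi 0)) (ha_bdd : ∃ c > (0 : ℝ), ∀ s > (0 : ℝ), c ≤ a s)
    (f : ℝ → ℝ) (hf_pos : ∀ s > (0 : ℝ), 0 < f s) (hf_reg : ContDiffOn ℝ 1 f (Ioi 0))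
    (a₀ f₀ μ γ a_inf f_inf k p : ℝ)
    (ha₀ : 0 < a₀) (hf₀ : 0 < f₀) (hμ₀ : 0 ≤ μ) (hμ₁ : μ < 1) (hγ : 1 < γ)
    (ha_inf : 0 < a_inf) (hf_inf : 0 < f_inf) (hk : 0 ≤ k) (hp : 1 < p)
    (hlim_a : Tendsto (fun s : ℝ => a s * s ^ (2 * μ)) (𝓝[>] 0) (𝓝 a₀))
    (hlim_f : Tendsto (fun s : ℝ => f s * s ^ γ) (𝓝[>] 0) (𝓝 f₀))
    (hfa : ∀ s > (0 : ℝ), 2 * deriv f s * a s ≤ f s * deriv a s)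
    (hlim_a' : Tendsto (fun s : ℝ => a s / s ^ k) atTop (𝓝 a_inf))
    (hlim_f' : Tendsto (fun s : ℝ => f s * s ^ p) atTop (𝓝 f_inf))
    (g : ℝ → ℝ) (hg : IsCauchyG a g) :
    ∀ ℓ ≥ (0 : ℝ), ∃ φ : ℝ → ℝ, IsPhi a f g ℓ φ ∧
      ∀ φ' : ℝ → ℝ, IsPhi a f g ℓ φ' → EqOn φ φ' (Ici 0) := by
  intro ℓ hℓ
  classical
  have hfc : ContinuousOn f (Ioi 0) := hf_reg.continuousOn
  have hint := intF f p f_inf hp hf_pos hfc hlim_f'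
  have hFder := F_hasDeriv hfc hint
  have hFpos := F_pos hf_pos hfc hint
  have hFanti := F_anti hf_pos hint
  have hFtend := F_tend hint
  have hgmono := g_mono ha_pos hg
  have hgtop := g_top ha_pos ha_reg.continuousOn hg
  have hgpos := hg.2.2.2.1
  have hgcont := hg.1
  -- the function hfun
  obtain ⟨hfun, hfun_def⟩ :
      ∃ h : ℝ → ℝ, h = fun t => Real.sqrt (ℓ ^ 2 + 2 * ∫ ξ in Ioi (g t), f ξ) := ⟨_, rfl⟩
  have harg : ∀ t > (0:ℝ), 0 < ℓ ^ 2 + 2 * ∫ ξ in Ioi (g t), f ξ := by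
    intro t ht
    have := hFpos (g t) (hgpos t ht)
    nlinarith [sq_nonneg ℓ]
  have hfun_pos : ∀ t > (0:ℝ), 0 < hfun t := by
    intro t ht
    rw [hfun_def]
    exact Real.sqrt_pos.2 (harg t ht)
  have hFc : ContinuousOn (fun x => ∫ ξ in Ioi x, f ξ) (Ioi 0) :=
    fun x hx => ((hFder x hx).continuousAt).continuousWithinAt
  have hgc' : ContinuousOn g (Ioi 0) := hgcont.mono Ioi_subset_Ici_self
  have hgmaps : MapsTo g (Ioi 0) (Ioi 0) := fun t ht => hgpos t ht
  have hfun_cont : ContinuousOn hfun (Ioi 0) := by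
    rw [hfun_def]
    exact Real.continuous_sqrt.comp_continuousOn
      (continuousOn_const.add (continuousOn_const.mul (hFc.comp hgc' hgmaps)))
  have hfun_anti : ∀ x > (0:ℝ), ∀ y, x ≤ y → hfun y ≤ hfun x := by
    intro x hx y hxy
    rw [hfun_def]
    have hy : (0:ℝ) < y := lt_of_lt_of_le hx hxy
    have hgxy : g x ≤ g y := hgmono.monotoneOn hx.le hy.le hxy
    have := hFanti (g x) (hgpos x hx) (g y) hgxy
    apply Real.sqrt_le_sqrt
    linarith
  -- the function H
  obtain ⟨H, H_def⟩ : ∃ H : ℝ → ℝ, H = (Ioi 0).indicator fun t => (hfun t)⁻¹ := ⟨_, rfl⟩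
  have H_eq : ∀ t > (0:ℝ), H t = (hfun t)⁻¹ := by
    intro t ht; rw [H_def]; exact indicator_of_mem ht _
  have H_nonneg : ∀ t, 0 ≤ H t := by
    intro t; rw [H_def]
    exact indicator_nonneg (fun u hu => inv_nonneg.2 (hfun_pos u hu).le) t
  have H_pos : ∀ t > (0:ℝ), 0 < H t := by
    intro t ht; rw [H_eq t ht]; exact inv_pos.2 (hfun_pos t ht)
  have H_mono : ∀ x > (0:ℝ), ∀ y, x ≤ y → H x ≤ H y := by
    intro x hx y hxy
    have hy : (0:ℝ) < y := lt_of_lt_of_le hx hxy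
    rw [H_eq x hx, H_eq y hy]
    exact inv_anti₀ (hfun_pos y hy) (hfun_anti x hx y hxy)
  have hinv_cont : ContinuousOn (fun t => (hfun t)⁻¹) (Ioi 0) :=
    hfun_cont.inv₀ fun t ht => (hfun_pos t ht).ne'
  have H_contOn : ContinuousOn H (Ioi 0) :=
    hinv_cont.congr fun t ht => H_eq t ht
  have H_meas : AEStronglyMeasurable H volume := by
    rw [H_def]
    exact ((aemeasurable_indicator_iff measurableSet_Ioi).2
      (hinv_cont.aemeasurable measurableSet_Ioi)).aestronglyMeasurable
  have H_ii : ∀ u v : ℝ, IntervalIntegrable H volume u v := by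
    intro u v
    apply IntegrableOn.intervalIntegrable
    have hD : (0:ℝ) < max (max u v) 1 := lt_of_lt_of_le one_pos (le_max_right _ _)
    refine Integrable.mono' (g := fun _ => H (max (max u v) 1))
      (integrableOn_const measure_Icc_lt_top.ne) (H_meas.restrict) ?_
    refine (ae_restrict_iff' measurableSet_uIcc).2 (ae_of_all _ fun w hw => ?_)
    rw [Real.norm_eq_abs, abs_of_nonneg (H_nonneg w)]
    rcases le_or_gt w 0 with hw0 | hw0
    · have : H w = 0 := by rw [H_def]; exact indicator_of_notMem (by simpa using hw0) _
      rw [this]; exact H_nonneg _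
    · refine H_mono w hw0 _ ?_
      have h1 : w ≤ max u v := le_trans hw.2 (by simp [uIcc])
      exact le_trans h1 (le_max_left _ _)

  -- the primitive Ψ
  obtain ⟨P, P_def⟩ : ∃ P : ℝ → ℝ, P = fun t => ∫ u in (0:ℝ)..t, H u := ⟨_, rfl⟩
  have P_cont : Continuous P := by
    rw [P_def]; exact intervalIntegral.continuous_primitive H_ii 0
  have P_add : ∀ u v : ℝ, (∫ x in u..v, H x) = P v - P u := by
    intro u v
    rw [P_def]
    have := intervalIntegral.integral_add_adjacent_intervals (H_ii 0 u) (H_ii u v)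
    simp only
    linarith
  have P_mono : ∀ u v : ℝ, u ≤ v → P u ≤ P v := by
    intro u v huv
    have h0 : 0 ≤ ∫ x in u..v, H x :=
      intervalIntegral.integral_nonneg huv fun x _ => H_nonneg x
    rw [P_add u v] at h0
    linarith
  have P_strict : ∀ u v : ℝ, 0 ≤ u → u < v → P u < P v := by
    intro u v hu huv
    have h0 : 0 < ∫ x in u..v, H x :=
      intervalIntegral.intervalIntegral_pos_of_pos_on (H_ii u v)
        (fun x hx => H_pos x (lt_of_le_of_lt hu hx.1)) huv
    rw [P_add u v] at h0
    linarith
  have P_neg : ∀ t ≤ (0:ℝ), P t = 0 := by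
    intro t ht
    rw [P_def]
    simp only
    rw [intervalIntegral.integral_symm]
    have hcg : EqOn H (fun _ => (0:ℝ)) (uIcc t 0) := by
      intro w hw
      rw [uIcc_of_le ht] at hw
      rw [H_def]
      exact indicator_of_notMem (by simpa using hw.2) _
    rw [intervalIntegral.integral_congr hcg]
    simp
  -- the extended primitive Ψe
  obtain ⟨Q, Q_def⟩ : ∃ Q : ℝ → ℝ, Q = fun t => P t + min t 0 := ⟨_, rfl⟩
  have Q_eval : ∀ t, Q t = P t + min t 0 := fun t => by rw [Q_def]
  have Q_strict : StrictMono Q := by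
    intro x y hxy
    rw [Q_eval x, Q_eval y]
    have hP : P x ≤ P y := P_mono x y hxy.le
    rcases le_or_gt y 0 with hy0 | hy0
    · rw [min_eq_left hy0, min_eq_left (hxy.le.trans hy0)]
      linarith
    · have hmin : min x 0 ≤ min y 0 := min_le_min hxy.le le_rfl
      have hPs : P x < P y := by
        rcases le_or_gt 0 x with hx0 | hx0
        · exact P_strict x y hx0 hxy
        · rw [P_neg x hx0.le]
          have := P_strict 0 y le_rfl hy0
          rwa [P_neg 0 le_rfl] at this
      linarith
  have Q_cont : Continuous Q := by
    rw [Q_def]; exact P_cont.add (continuous_id.min continuous_const)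
  have Q_zero : Q 0 = 0 := by
    rw [Q_eval, P_neg 0 le_rfl]; simp
  have Q_neg : ∀ t ≤ (0:ℝ), Q t = t := by
    intro t ht
    rw [Q_eval, P_neg t ht, min_eq_left ht, zero_add]
  have Q_atBot : Tendsto Q atBot atBot := by
    refine tendsto_id.congr' ?_
    filter_upwards [eventually_le_atBot (0:ℝ)] with t ht
    exact (Q_neg t ht).symm
  have Q_atTop : Tendsto Q atTop atTop := by
    have hH1 : 0 < H 1 := H_pos 1 one_pos
    have hlin : Tendsto (fun t : ℝ => P 1 + (t - 1) * H 1) atTop atTop := by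
      refine tendsto_atTop_add_const_left _ _ (Tendsto.atTop_mul_const hH1 ?_)
      exact tendsto_atTop_add_const_right _ (-1) tendsto_id |>.congr fun t => by simp [sub_eq_add_neg]
    refine tendsto_atTop_mono' atTop ?_ hlin
    filter_upwards [eventually_ge_atTop (1:ℝ)] with t ht
    have hconst : (∫ x in (1:ℝ)..t, H 1) = (t - 1) * H 1 := by
      rw [intervalIntegral.integral_const]; simp [mul_comm]
    have hmono2 : (∫ x in (1:ℝ)..t, H 1) ≤ ∫ x in (1:ℝ)..t, H x :=
      intervalIntegral.integral_mono_on ht intervalIntegrable_const (H_ii 1 t)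
        fun x hx => H_mono 1 one_pos x hx.1
    have hPt : (∫ x in (1:ℝ)..t, H x) = P t - P 1 := P_add 1 t
    rw [Q_eval, min_eq_right (le_trans zero_le_one ht)]
    linarith
  have Q_surj : Function.Surjective Q := Q_cont.surjective Q_atTop Q_atBot

  -- the inverse function φ
  obtain ⟨e, he⟩ : ∃ e : ℝ ≃o ℝ, ⇑e = Q :=
    ⟨StrictMono.orderIsoOfSurjective Q Q_strict Q_surj,
      StrictMono.coe_orderIsoOfSurjective Q Q_strict Q_surj⟩
  obtain ⟨φ, hφ_def⟩ : ∃ φ : ℝ → ℝ, φ = ⇑e.symm := ⟨_, rfl⟩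
  have φ_li : ∀ y, Q (φ y) = y := by
    intro y
    rw [hφ_def, ← he]
    exact e.apply_symm_apply y
  have φ_cont : Continuous φ := by rw [hφ_def]; exact OrderIso.continuous e.symm
  have φ_0 : φ 0 = 0 := by
    apply Q_strict.injective
    rw [φ_li 0, Q_zero]
  have φ_pos : ∀ s > (0:ℝ), 0 < φ s := by
    intro s hs
    have h1 : Q 0 < Q (φ s) := by rw [Q_zero, φ_li]; exact hs
    exact Q_strict.lt_iff_lt.1 h1
  have φ_top : Tendsto φ atTop atTop := by
    rw [hφ_def]; exact OrderIso.tendsto_atTop e.symm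
  -- derivatives
  have PD : ∀ t > (0:ℝ), HasDerivAt P (H t) t := by
    intro t ht
    rw [P_def]
    exact intervalIntegral.integral_hasDerivAt_right (H_ii 0 t)
      (H_contOn.stronglyMeasurableAtFilter isOpen_Ioi t ht)
      (H_contOn.continuousAt (isOpen_Ioi.mem_nhds ht))
  have QD : ∀ t > (0:ℝ), HasDerivAt Q (H t) t := by
    intro t ht
    refine (PD t ht).congr_of_eventuallyEq ?_
    filter_upwards [isOpen_Ioi.mem_nhds ht] with u hu
    rw [Q_eval, min_eq_right (le_of_lt hu), add_zero]
  have φD : ∀ s > (0:ℝ), HasDerivAt φ (hfun (φ s)) s := by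
    intro s hs
    have ht : 0 < φ s := φ_pos s hs
    have h1 : HasDerivAt φ (H (φ s))⁻¹ s :=
      HasDerivAt.of_local_left_inverse φ_cont.continuousAt (QD _ ht)
        (H_pos _ ht).ne' (Eventually.of_forall φ_li)
    have h2 : (H (φ s))⁻¹ = hfun (φ s) := by rw [H_eq _ ht, inv_inv]
    rwa [h2] at h1
  have φD' : ∀ s > (0:ℝ),
      HasDerivAt φ (Real.sqrt (ℓ ^ 2 + 2 * ∫ ξ in Ioi (g (φ s)), f ξ)) s := by
    intro s hs
    have := φD s hs
    rwa [hfun_def] at this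
  have φ_mapsTo : MapsTo φ (Ioi 0) (Ioi 0) := fun s hs => φ_pos s hs
  -- smoothness
  have hnot1 : ((1:WithTop ℕ∞) = ⊤ → ∀ {α : Prop}, α → α) := fun h => by simp at h
  have contF1 : ContDiffOn ℝ 1 (fun x => ∫ ξ in Ioi x, f ξ) (Ioi 0) := by
    rw [show (1:WithTop ℕ∞) = 0 + 1 from by norm_num,
      contDiffOn_succ_iff_deriv_of_isOpen isOpen_Ioi]
    refine ⟨fun x hx => (hFder x hx).differentiableAt.differentiableWithinAt,
      fun h => by simp at h, ?_⟩
    rw [contDiffOn_zero]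
    refine (hfc.neg).congr fun x hx => ?_
    exact (hFder x hx).deriv
  have contg1 : ContDiffOn ℝ 1 g (Ioi 0) := hg.2.1.of_le (by norm_num)
  have conthfun1 : ContDiffOn ℝ 1 hfun (Ioi 0) := by
    rw [hfun_def]
    refine ContDiffOn.sqrt ?_ fun t ht => (harg t ht).ne'
    exact contDiffOn_const.add (contDiffOn_const.mul (contF1.comp contg1 hgmaps))
  have contφ1 : ContDiffOn ℝ 1 φ (Ioi 0) := by
    rw [show (1:WithTop ℕ∞) = 0 + 1 from by norm_num,
      contDiffOn_succ_iff_deriv_of_isOpen isOpen_Ioi]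
    refine ⟨fun s hs => (φD s hs).differentiableAt.differentiableWithinAt,
      fun h => by simp at h, ?_⟩
    rw [contDiffOn_zero]
    refine (hfun_cont.comp φ_cont.continuousOn φ_mapsTo).congr fun s hs => ?_
    exact (φD s hs).deriv
  have contφ2 : ContDiffOn ℝ 2 φ (Ioi 0) := by
    rw [show (2:WithTop ℕ∞) = 1 + 1 from by norm_num,
      contDiffOn_succ_iff_deriv_of_isOpen isOpen_Ioi]
    refine ⟨fun s hs => (φD s hs).differentiableAt.differentiableWithinAt,
      fun h => by simp at h, ?_⟩
    refine (conthfun1.comp contφ1 φ_mapsTo).congr fun s hs => ?_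
    exact (φD s hs).deriv
  -- asymptotics of the derivative
  have hFgφ : Tendsto (fun s => ∫ ξ in Ioi (g (φ s)), f ξ) atTop (𝓝 0) :=
    (hFtend.comp hgtop).comp φ_top
  have hderiv_tend : Tendsto (deriv φ) atTop (𝓝 ℓ) := by
    have h1 : Tendsto (fun s => ℓ ^ 2 + 2 * ∫ ξ in Ioi (g (φ s)), f ξ) atTop
        (𝓝 (ℓ ^ 2 + 2 * 0)) := tendsto_const_nhds.add (hFgφ.const_mul 2)
    have h2 : Tendsto (fun s => hfun (φ s)) atTop (𝓝 ℓ) := by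
      rw [hfun_def]
      have h3 := (Real.continuous_sqrt.tendsto (ℓ ^ 2 + 2 * 0)).comp h1
      rw [show ℓ ^ 2 + 2 * 0 = ℓ ^ 2 by ring, Real.sqrt_sq hℓ] at h3
      exact h3
    refine h2.congr' ?_
    filter_upwards [eventually_gt_atTop (0:ℝ)] with s hs
    exact ((φD s hs).deriv).symm

  -- assemble
  refine ⟨φ, ⟨φ_cont.continuousOn, contφ2, φ_0, φ_pos, φD', hderiv_tend, φ_top⟩, ?_⟩
  -- uniqueness
  rintro ψ ⟨ψ_cont, -, ψ_0, ψ_pos, ψD, -, -⟩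
  have key : ∀ s > (0:ℝ), Q (ψ s) = s := by
    intro s hs
    obtain ⟨W, W_def⟩ : ∃ W : ℝ → ℝ, W = fun u => Q (ψ u) - u := ⟨_, rfl⟩
    have W_cont : ContinuousOn W (Ici 0) := by
      rw [W_def]
      exact (Q_cont.comp_continuousOn ψ_cont).sub continuousOn_id
    have W_der : ∀ x > (0:ℝ), HasDerivAt W 0 x := by
      intro x hx
      have hψx : 0 < ψ x := ψ_pos x hx
      have hψD : HasDerivAt ψ (hfun (ψ x)) x := by
        rw [hfun_def]; exact ψD x hx
      have hQψ : HasDerivAt (fun u => Q (ψ u)) (H (ψ x) * hfun (ψ x)) x :=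
        (QD (ψ x) hψx).comp x hψD
      have hval : H (ψ x) * hfun (ψ x) = 1 := by
        rw [H_eq _ hψx]
        exact inv_mul_cancel₀ (hfun_pos _ hψx).ne'
      rw [W_def]
      have := hQψ.sub (hasDerivAt_id x)
      rw [hval] at this
      rw [sub_self] at this; exact this
    have W_const : ∀ ε, 0 < ε → ε ≤ s → W s = W ε := by
      intro ε hε hεs
      have := constant_of_has_deriv_right_zero
        (W_cont.mono (Icc_subset_Ici_self.trans (Ici_subset_Ici.2 hε.le)))
        (fun x hx => ((W_der x (lt_of_lt_of_le hε hx.1)).hasDerivWithinAt))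
        s ⟨hεs, le_rfl⟩
      exact this
    have T1 : Tendsto W (𝓝[>] 0) (𝓝 (W 0)) :=
      ((W_cont 0 self_mem_Ici).mono Ioi_subset_Ici_self)
    have T2 : Tendsto W (𝓝[>] 0) (𝓝 (W s)) := by
      refine tendsto_const_nhds.congr' ?_
      filter_upwards [Ioc_mem_nhdsGT_of_mem (⟨le_rfl, hs⟩ : (0:ℝ) ∈ Ico 0 s)] with ε hε
      exact W_const ε hε.1 hε.2
    have hWs : W s = W 0 := tendsto_nhds_unique T2 T1
    have hW0 : W 0 = 0 := by rw [W_def]; simp [ψ_0, Q_zero]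
    have : W s = 0 := by rw [hWs, hW0]
    rw [W_def] at this
    simpa [sub_eq_zero] using this
  intro s hs
  rcases eq_or_lt_of_le (mem_Ici.1 hs) with h0 | h0
  · rw [← h0, φ_0, ψ_0]
  · apply Q_strict.injective
    rw [φ_li s, key s h0]
end

section
/- Let g be the unique solution of the Cauchy problem g' = 1/√(a∘g), g(0) = 0, g > 0 on (0,∞), set h(s) := f(g(s))/√(a(g(s))), let ℓ ≥ 0, and let φ be the unique solution of φ'(s) = √(ℓ² + 2∫_{g(φ(s))}^{+∞} f(ξ)dξ) for s > 0, φ(0) = 0, φ > 0 on (0,∞). Then there exists a constant C > 0 such that lim_{τ→0⁺} φ(τ)·h(φ(τ)) / τ^{(2−2γ)/(1+γ−2μ)} = C; consequently, the integral ∫₀¹ φ(ξ)h(φ(ξ)) dξ is finite if and only if γ < 3 − 2μ. -/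
open Set Filter MeasureTheory
open scoped Topology

lemma aux_rpow_tendsto_zero {c : ℝ} (hc : 0 < c) :
    Tendsto (fun t : ℝ => t ^ c) (𝓝[>] (0:ℝ)) (𝓝 0) := by
  have h := (Real.continuousAt_rpow_const 0 c (Or.inr hc.le)).tendsto
  rw [Real.zero_rpow hc.ne'] at h
  exact h.mono_left nhdsWithin_le_nhds

lemma aux_tendsto_pos {u : ℝ → ℝ} (hcont : ContinuousOn u (Ici 0)) (h0 : u 0 = 0)
    (hpos : ∀ s > (0:ℝ), 0 < u s) : Tendsto u (𝓝[>] (0:ℝ)) (𝓝[>] (0:ℝ)) := by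
  rw [tendsto_nhdsWithin_iff]
  constructor
  · have := (hcont 0 self_mem_Ici).tendsto
    rw [h0] at this
    exact this.mono_left (nhdsWithin_mono _ Ioi_subset_Ici_self)
  · exact eventually_mem_nhdsWithin.mono fun s hs => hpos s hs

lemma aux_tail {f : ℝ → ℝ} {γ f₀ : ℝ} (hγ : 1 < γ) (hf₀ : 0 < f₀)
    (hlim : Tendsto (fun s : ℝ => f s * s ^ γ) (𝓝[>] 0) (𝓝 f₀))
    (hint : ∀ M > (0:ℝ), IntegrableOn f (Ioi M)) :
    Tendsto (fun t : ℝ => (∫ ξ in Ioi t, f ξ) * t ^ (γ - 1)) (𝓝[>] (0:ℝ))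
      (𝓝 (f₀ / (γ - 1))) := by
  have hγ1 : (0:ℝ) < γ - 1 := by linarith
  rw [Metric.tendsto_nhds]
  intro ε hε
  set ε₁ : ℝ := min f₀ (ε * (γ - 1) / 4) with hε₁def
  have hε₁ : 0 < ε₁ := lt_min hf₀ (by positivity)
  obtain ⟨δ₀, hδ₀, hδprop⟩ := Metric.tendsto_nhdsWithin_nhds.1 hlim ε₁ hε₁
  set d : ℝ := δ₀ / 2 with hddef
  have hd : 0 < d := by positivity
  have hbound : ∀ ξ ∈ Ioc (0:ℝ) d, |f ξ * ξ ^ γ - f₀| < ε₁ := by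
    intro ξ hξ
    have := hδprop hξ.1 (by
      rw [Real.dist_eq, sub_zero, abs_of_pos hξ.1]
      calc ξ ≤ d := hξ.2
        _ < δ₀ := by rw [hddef]; linarith)
    rwa [Real.dist_eq] at this
  have hup : ∀ ξ ∈ Ioc (0:ℝ) d, f ξ ≤ (f₀ + ε₁) * ξ ^ (-γ) := by
    intro ξ hξ
    have hξp : (0:ℝ) < ξ ^ γ := Real.rpow_pos_of_pos hξ.1 _
    have h2 : f ξ * ξ ^ γ ≤ f₀ + ε₁ := by linarith [(abs_lt.1 (hbound ξ hξ)).2]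
    have h3 : f ξ * ξ ^ γ * (ξ ^ γ)⁻¹ ≤ (f₀ + ε₁) * (ξ ^ γ)⁻¹ :=
      mul_le_mul_of_nonneg_right h2 (inv_nonneg.2 hξp.le)
    rwa [mul_assoc, mul_inv_cancel₀ hξp.ne', mul_one, ← Real.rpow_neg hξ.1.le] at h3
  have hlo : ∀ ξ ∈ Ioc (0:ℝ) d, (f₀ - ε₁) * ξ ^ (-γ) ≤ f ξ := by
    intro ξ hξ
    have hξp : (0:ℝ) < ξ ^ γ := Real.rpow_pos_of_pos hξ.1 _
    have h2 : f₀ - ε₁ ≤ f ξ * ξ ^ γ := by linarith [(abs_lt.1 (hbound ξ hξ)).1]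
    have h3 : (f₀ - ε₁) * (ξ ^ γ)⁻¹ ≤ f ξ * ξ ^ γ * (ξ ^ γ)⁻¹ :=
      mul_le_mul_of_nonneg_right h2 (inv_nonneg.2 hξp.le)
    rwa [mul_assoc, mul_inv_cancel₀ hξp.ne', mul_one, ← Real.rpow_neg hξ.1.le] at h3
  have hT0 : Tendsto (fun t : ℝ => t ^ (γ-1)) (𝓝[>] (0:ℝ)) (𝓝 0) := aux_rpow_tendsto_zero hγ1
  have ev1 : ∀ᶠ t in 𝓝[>] (0:ℝ), |∫ ξ in Ioi d, f ξ| * t ^ (γ-1) < ε / 4 := by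
    have h : Tendsto (fun t : ℝ => |∫ ξ in Ioi d, f ξ| * t ^ (γ-1)) (𝓝[>] (0:ℝ)) (𝓝 0) := by
      simpa using hT0.const_mul |∫ ξ in Ioi d, f ξ|
    exact h.eventually_lt_const (by positivity)
  have ev2 : ∀ᶠ t in 𝓝[>] (0:ℝ), f₀ * (d ^ (1-γ) * t ^ (γ-1)) / (γ-1) < ε / 4 := by
    have h : Tendsto (fun t : ℝ => f₀ * (d ^ (1-γ) * t ^ (γ-1)) / (γ-1)) (𝓝[>] (0:ℝ)) (𝓝 0) := by
      have := (hT0.const_mul (d ^ (1-γ))).const_mul f₀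
      simpa using this.div_const (γ-1)
    exact h.eventually_lt_const (by positivity)
  filter_upwards [ev1, ev2, Ioo_mem_nhdsGT_of_mem ⟨le_refl (0:ℝ), hd⟩] with t h1 h2 ht
  have ht0 : (0:ℝ) < t := ht.1
  have htd : t < d := ht.2
  have hfint1 : IntegrableOn f (Ioc t d) := (hint t ht0).mono_set Ioc_subset_Ioi_self
  have hfint2 : IntegrableOn f (Ioi d) := hint d hd
  have hrint : IntegrableOn (fun ξ : ℝ => ξ ^ (-γ)) (Ioc t d) := by
    have hc : ContinuousOn (fun ξ : ℝ => ξ ^ (-γ)) (Icc t d) := fun ξ hξ =>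
      (Real.continuousAt_rpow_const ξ (-γ) (Or.inl (by linarith [hξ.1]))).continuousWithinAt
    exact hc.integrableOn_Icc.mono_set Ioc_subset_Icc_self
  have hsplit : (∫ ξ in Ioi t, f ξ) = (∫ ξ in Ioc t d, f ξ) + ∫ ξ in Ioi d, f ξ := by
    rw [← setIntegral_union (Ioc_disjoint_Ioi le_rfl) measurableSet_Ioi hfint1 hfint2,
      Ioc_union_Ioi_eq_Ioi htd.le]
  have hrval : (∫ ξ in Ioc t d, ξ ^ (-γ)) = (t ^ (1-γ) - d ^ (1-γ)) / (γ - 1) := by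
    rw [← intervalIntegral.integral_of_le htd.le]
    rw [integral_rpow (Or.inr ⟨by intro h; linarith, by
      rw [uIcc_of_le htd.le]; exact fun h => absurd h.1 (not_le.2 ht0)⟩)]
    have hexp : -γ + 1 = 1 - γ := by ring
    rw [hexp, show (1:ℝ)-γ = -(γ-1) by ring, div_neg, ← neg_div]
    congr 1
    ring
  have hT : (0:ℝ) < t ^ (γ-1) := Real.rpow_pos_of_pos ht0 _
  have hX1 : d ^ (1-γ) * t ^ (γ-1) ≤ 1 := by
    have hle : t ^ (γ-1) ≤ d ^ (γ-1) := Real.rpow_le_rpow ht0.le htd.le hγ1.le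
    have h2' : d ^ (1-γ) = (d ^ (γ-1))⁻¹ := by
      rw [show (1-γ) = -(γ-1) by ring, Real.rpow_neg hd.le]
    rw [h2', inv_mul_le_iff₀ (Real.rpow_pos_of_pos hd _)]
    linarith
  have hX0 : 0 ≤ d ^ (1-γ) * t ^ (γ-1) := by positivity
  have htt : t ^ (1-γ) * t ^ (γ-1) = 1 := by
    rw [← Real.rpow_add ht0]; norm_num
  have hSup : (∫ ξ in Ioc t d, f ξ) ≤ (f₀ + ε₁) * ((t ^ (1-γ) - d ^ (1-γ)) / (γ - 1)) := by
    calc (∫ ξ in Ioc t d, f ξ) ≤ ∫ ξ in Ioc t d, (f₀ + ε₁) * ξ ^ (-γ) :=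
          setIntegral_mono_on hfint1 (hrint.const_mul _) measurableSet_Ioc
            (fun ξ hξ => hup ξ ⟨lt_trans ht0 hξ.1, hξ.2⟩)
      _ = (f₀ + ε₁) * ((t ^ (1-γ) - d ^ (1-γ)) / (γ - 1)) := by
          rw [integral_const_mul, hrval]
  have hSlo : (f₀ - ε₁) * ((t ^ (1-γ) - d ^ (1-γ)) / (γ - 1)) ≤ ∫ ξ in Ioc t d, f ξ := by
    calc (f₀ - ε₁) * ((t ^ (1-γ) - d ^ (1-γ)) / (γ - 1))
        = ∫ ξ in Ioc t d, (f₀ - ε₁) * ξ ^ (-γ) := by rw [integral_const_mul, hrval]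
      _ ≤ ∫ ξ in Ioc t d, f ξ :=
          setIntegral_mono_on (hrint.const_mul _) hfint1 measurableSet_Ioc
            (fun ξ hξ => hlo ξ ⟨lt_trans ht0 hξ.1, hξ.2⟩)
  have hJ : ((t ^ (1-γ) - d ^ (1-γ)) / (γ - 1)) * t ^ (γ-1)
      = (1 - d ^ (1-γ) * t ^ (γ-1)) / (γ-1) := by
    rw [div_mul_eq_mul_div]
    congr 1
    rw [sub_mul, htt]
  set X := d ^ (1-γ) * t ^ (γ-1) with hXdef
  have hSupT : (∫ ξ in Ioc t d, f ξ) * t ^ (γ-1) ≤ (f₀ + ε₁) * ((1 - X) / (γ-1)) := by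
    rw [← hJ, ← mul_assoc]
    exact mul_le_mul_of_nonneg_right hSup hT.le
  have hSloT : (f₀ - ε₁) * ((1 - X) / (γ-1)) ≤ (∫ ξ in Ioc t d, f ξ) * t ^ (γ-1) := by
    rw [← hJ, ← mul_assoc]
    exact mul_le_mul_of_nonneg_right hSlo hT.le
  have hFd' := abs_lt.1 (show |(∫ ξ in Ioi d, f ξ) * t ^ (γ-1)| < ε / 4 by
    rw [abs_mul, abs_of_pos hT]; exact h1)
  have hε₁le : ε₁ ≤ ε * (γ - 1) / 4 := min_le_right _ _
  have hε₁f₀ : ε₁ ≤ f₀ := min_le_left _ _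
  have hee : ε₁/(γ-1) ≤ ε/4 := by
    rw [div_le_iff₀ hγ1]
    calc ε₁ ≤ ε * (γ-1)/4 := hε₁le
      _ = ε/4 * (γ-1) := by ring
  have hup2 : (f₀ + ε₁) * ((1 - X) / (γ-1)) ≤ f₀/(γ-1) + ε₁/(γ-1) := by
    rw [show (f₀ + ε₁) * ((1 - X) / (γ-1)) = ((f₀ + ε₁) * (1 - X))/(γ-1) by ring,
      show f₀/(γ-1) + ε₁/(γ-1) = (f₀ + ε₁)/(γ-1) by ring]
    exact (div_le_div_iff_of_pos_right hγ1).2 (by nlinarith)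
  have key2 : f₀/(γ-1) - ε₁/(γ-1) - f₀*X/(γ-1) ≤ (f₀ - ε₁) * ((1 - X)/(γ-1)) := by
    rw [show f₀/(γ-1) - ε₁/(γ-1) - f₀*X/(γ-1) = (f₀ - ε₁ - f₀*X)/(γ-1) by ring,
      show (f₀ - ε₁) * ((1 - X)/(γ-1)) = ((f₀ - ε₁)*(1 - X))/(γ-1) by ring]
    exact (div_le_div_iff_of_pos_right hγ1).2 (by nlinarith [mul_nonneg hε₁.le hX0])
  rw [Real.dist_eq, hsplit, add_mul, abs_lt]
  constructor
  · linarith [hSloT, key2, hFd'.1, hee, h2]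
  · linarith [hSupT, hup2, hFd'.2, hee, h2]

lemma aux_pow {X P T ax fx μ γ : ℝ} (hX : 0 < X) (hP : 0 < P) (hT : 0 < T)
    (hax : 0 < ax) (hμ : μ < 1) (hden : 0 < 1 + γ - 2*μ) :
    (fx * X ^ γ / Real.sqrt (ax * X ^ (2*μ))) * (X / P ^ (1-μ)⁻¹) ^ (μ - γ) *
      (P / T ^ ((2-2*μ)/(1+γ-2*μ))) ^ ((1-γ)/(1-μ))
    = (P * (fx / Real.sqrt ax)) / T ^ ((2-2*γ)/(1+γ-2*μ)) := by
  have h1μ : (0:ℝ) < 1 - μ := by linarith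
  have e1 : Real.sqrt (ax * X ^ (2*μ)) = Real.sqrt ax * X ^ μ := by
    rw [Real.sqrt_mul hax.le, Real.sqrt_eq_rpow (X ^ (2*μ)), ← Real.rpow_mul hX.le]
    congr 2
    ring
  have e2 : (X / P ^ (1-μ)⁻¹) ^ (μ - γ) = X ^ (μ-γ) / P ^ ((1-μ)⁻¹ * (μ-γ)) := by
    rw [Real.div_rpow hX.le (Real.rpow_nonneg hP.le _), ← Real.rpow_mul hP.le]
  have e3 : (P / T ^ ((2-2*μ)/(1+γ-2*μ))) ^ ((1-γ)/(1-μ))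
      = P ^ ((1-γ)/(1-μ)) / T ^ ((2-2*μ)/(1+γ-2*μ) * ((1-γ)/(1-μ))) := by
    rw [Real.div_rpow hP.le (Real.rpow_nonneg hT.le _), ← Real.rpow_mul hT.le]
  have hTT : T ^ ((2-2*μ)/(1+γ-2*μ) * ((1-γ)/(1-μ))) = T ^ ((2-2*γ)/(1+γ-2*μ)) := by
    congr 1
    field_simp
  have hXmg : X ^ (μ-γ) = X ^ μ / X ^ γ := Real.rpow_sub hX μ γ
  have hPc : P ^ ((1-γ)/(1-μ)) = P * P ^ ((1-μ)⁻¹ * (μ-γ)) := by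
    rw [show (1-γ)/(1-μ) = 1 + (1-μ)⁻¹ * (μ-γ) by field_simp; ring, Real.rpow_add hP,
      Real.rpow_one]
  rw [e1, e2, e3, hTT, hXmg, hPc]
  have n1 : Real.sqrt ax ≠ 0 := (Real.sqrt_pos.2 hax).ne'
  have n2 : X ^ μ ≠ 0 := (Real.rpow_pos_of_pos hX _).ne'
  have n3 : X ^ γ ≠ 0 := (Real.rpow_pos_of_pos hX _).ne'
  have n4 : P ^ ((1-μ)⁻¹ * (μ-γ)) ≠ 0 := (Real.rpow_pos_of_pos hP _).ne'
  have n5 : T ^ ((2-2*γ)/(1+γ-2*μ)) ≠ 0 := (Real.rpow_pos_of_pos hT _).ne'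
  field_simp

/-- With `h(s) = f(g(s))/√(a(g(s)))`, the product `φ(τ)h(φ(τ))` behaves like
`τ^{(2−2γ)/(1+γ−2μ)}` as `τ → 0⁺`; consequently `∫₀¹ φ(ξ)h(φ(ξ)) dξ` is finite
if and only if `γ < 3 − 2μ`. -/
theorem phi_h_integrability (a : ℝ → ℝ) (ha_pos : ∀ s > (0 : ℝ), 0 < a s)
    (ha_reg : ContDiffOn ℝ 1 a (Ioi 0)) (ha_bdd : ∃ c > (0 : ℝ), ∀ s > (0 : ℝ), c ≤ a s)
    (f : ℝ → ℝ) (hf_pos : ∀ s > (0 : ℝ), 0 < f s) (hf_reg : ContDiffOn ℝ 1 f (Ioi 0))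
    (a₀ f₀ μ γ : ℝ) (ha₀ : 0 < a₀) (hf₀ : 0 < f₀) (hμ₀ : 0 ≤ μ) (hμ₁ : μ < 1) (hγ : 1 < γ)
    (hlim_a : Tendsto (fun s : ℝ => a s * s ^ (2 * μ)) (𝓝[>] 0) (𝓝 a₀))
    (hlim_f : Tendsto (fun s : ℝ => f s * s ^ γ) (𝓝[>] 0) (𝓝 f₀))
    (hf_int : ∀ M > (0 : ℝ), IntegrableOn f (Ioi M))
    (g : ℝ → ℝ) (hg : IsCauchyG a g)
    (ℓ : ℝ) (hℓ : 0 ≤ ℓ) (φ : ℝ → ℝ)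
    (hφ_cont : ContinuousOn φ (Ici 0)) (hφ_reg : ContDiffOn ℝ 2 φ (Ioi 0))
    (hφ0 : φ 0 = 0) (hφ_pos : ∀ s > (0 : ℝ), 0 < φ s)
    (hφ' : ∀ s > (0 : ℝ),
      HasDerivAt φ (Real.sqrt (ℓ ^ 2 + 2 * ∫ ξ in Ioi (g (φ s)), f ξ)) s) :
    ∃ C > (0 : ℝ),
      Tendsto (fun τ : ℝ =>
          (φ τ * (f (g (φ τ)) / Real.sqrt (a (g (φ τ))))) / τ ^ ((2 - 2 * γ) / (1 + γ - 2 * μ)))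
        (𝓝[>] 0) (𝓝 C) ∧
      (IntegrableOn (fun ξ => φ ξ * (f (g (φ ξ)) / Real.sqrt (a (g (φ ξ))))) (Ioo 0 1) ↔
        γ < 3 - 2 * μ) := by
  obtain ⟨hg_cont, hg_reg, hg0, hg_pos, hg'⟩ := hg
  have h1μ : (0:ℝ) < 1 - μ := by linarith
  have hγ1 : (0:ℝ) < γ - 1 := by linarith
  have hden : (0:ℝ) < 1 + γ - 2*μ := by linarith
  set p : ℝ := (1-μ)⁻¹ with hpdef
  have hp : 0 < p := by rw [hpdef]; positivity
  set q : ℝ := (2-2*μ)/(1+γ-2*μ) with hqdef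
  have hq : 0 < q := div_pos (by linarith) hden
  set rr : ℝ := (1+γ-2*μ)/(2-2*μ) with hrdef
  have hr : 0 < rr := div_pos hden (by linarith)
  have hne1 : (2-2*μ) ≠ 0 := ne_of_gt (by linarith)
  have hrq : rr * q = 1 := by
    rw [hqdef, hrdef]
    field_simp
  have hr2 : 0 < 2*(rr-1) := by
    rw [hrdef]
    have h : (1+γ-2*μ)/(2-2*μ) - 1 = (γ-1)/(2-2*μ) := by field_simp [hne1]; ring
    rw [h]
    have : 0 < (γ-1)/(2-2*μ) := div_pos hγ1 (by linarith)
    linarith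
  have hsa₀ : 0 < Real.sqrt a₀ := Real.sqrt_pos.2 ha₀
  have tg : Tendsto g (𝓝[>] (0:ℝ)) (𝓝[>] (0:ℝ)) := aux_tendsto_pos hg_cont hg0 hg_pos
  have tφ : Tendsto φ (𝓝[>] (0:ℝ)) (𝓝[>] (0:ℝ)) := aux_tendsto_pos hφ_cont hφ0 hφ_pos
  have tgφ : Tendsto (fun τ => g (φ τ)) (𝓝[>] (0:ℝ)) (𝓝[>] (0:ℝ)) := tg.comp tφ
  have hsqa : Tendsto (fun t => Real.sqrt (a t * t ^ (2*μ))) (𝓝[>] (0:ℝ))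
      (𝓝 (Real.sqrt a₀)) := (Real.continuous_sqrt.tendsto a₀).comp hlim_a
  -- Step A : asymptotics of g
  have hkey : Tendsto (fun t : ℝ => 1 / Real.sqrt (a t) * (1-μ) * t ^ (1-μ-1)) (𝓝[>] (0:ℝ))
      (𝓝 ((1-μ) / Real.sqrt a₀)) := by
    have h2 : Tendsto (fun t : ℝ => (1-μ) / Real.sqrt (a t * t ^ (2*μ))) (𝓝[>] (0:ℝ))
        (𝓝 ((1-μ) / Real.sqrt a₀)) := tendsto_const_nhds.div hsqa hsa₀.ne'
    apply h2.congr'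
    filter_upwards [self_mem_nhdsWithin] with t ht
    have ht0 : (0:ℝ) < t := ht
    have hat : 0 < a t := ha_pos t ht0
    have e1 : Real.sqrt (a t * t ^ (2*μ)) = Real.sqrt (a t) * t ^ μ := by
      rw [Real.sqrt_mul hat.le, Real.sqrt_eq_rpow (t ^ (2*μ)), ← Real.rpow_mul ht0.le]
      congr 2
      ring
    rw [e1, show (1-μ-1 : ℝ) = -μ by ring, Real.rpow_neg ht0.le]
    have n1 : Real.sqrt (a t) ≠ 0 := (Real.sqrt_pos.2 hat).ne'
    have n2 : t ^ μ ≠ 0 := (Real.rpow_pos_of_pos ht0 _).ne'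
    field_simp
  have hA : Tendsto (fun s => g s ^ (1-μ) / s) (𝓝[>] (0:ℝ)) (𝓝 ((1-μ) / Real.sqrt a₀)) := by
    refine HasDerivAt.lhopital_zero_right_on_Ioo (a := 0) (b := 1) zero_lt_one
      (f' := fun s => 1 / Real.sqrt (a (g s)) * (1-μ) * g s ^ (1-μ-1))
      (g' := fun _ => (1:ℝ)) (fun x hx => ?_) (fun x hx => hasDerivAt_id x)
      (fun x hx => one_ne_zero) ?_ ?_ ?_
    · exact (hg' x hx.1).rpow_const (Or.inl (hg_pos x hx.1).ne')
    · exact (aux_rpow_tendsto_zero h1μ).comp tg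
    · exact Filter.tendsto_id.mono_left nhdsWithin_le_nhds
    · simp only [div_one]
      exact hkey.comp tg
  set Lg : ℝ := ((1-μ) / Real.sqrt a₀) ^ p with hLgdef
  have hLg : 0 < Lg := Real.rpow_pos_of_pos (div_pos h1μ hsa₀) _
  have hGlim : Tendsto (fun s => g s / s ^ p) (𝓝[>] (0:ℝ)) (𝓝 Lg) := by
    have hc : Tendsto (fun x : ℝ => x ^ p) (𝓝 ((1-μ) / Real.sqrt a₀)) (𝓝 Lg) :=
      (Real.continuousAt_rpow_const _ p (Or.inl (div_pos h1μ hsa₀).ne')).tendsto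
    apply (hc.comp hA).congr'
    filter_upwards [self_mem_nhdsWithin] with s hs
    have hs0 : (0:ℝ) < s := hs
    have hgs := hg_pos s hs0
    show (g s ^ (1-μ) / s) ^ p = g s / s ^ p
    rw [Real.div_rpow (Real.rpow_nonneg hgs.le _) hs0.le, ← Real.rpow_mul hgs.le,
      mul_inv_cancel₀ h1μ.ne', Real.rpow_one]
  -- Step B : tail integral asymptotics
  have hF : Tendsto (fun t : ℝ => (∫ ξ in Ioi t, f ξ) * t ^ (γ - 1)) (𝓝[>] (0:ℝ))
      (𝓝 (f₀ / (γ - 1))) := aux_tail hγ hf₀ hlim_f hf_int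
  -- Step C : asymptotics of φ
  set K : ℝ := Real.sqrt (2 * (f₀/(γ-1) * Lg ^ (1-γ))) with hKdef
  have hK : 0 < K := Real.sqrt_pos.2 (by
    have h1 := Real.rpow_pos_of_pos hLg (1-γ)
    have h2 := div_pos hf₀ hγ1
    positivity)
  have hexpC : p * (γ-1) = 2*(rr-1) := by
    rw [hpdef, hrdef]; field_simp [hne1]; ring
  have hW : Tendsto (fun τ => Real.sqrt (ℓ^2 + 2 * ∫ ξ in Ioi (g (φ τ)), f ξ) * rr *
      φ τ ^ (rr-1)) (𝓝[>] (0:ℝ)) (𝓝 (rr * K)) := by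
    have t1 : Tendsto (fun τ => ℓ^2 * φ τ ^ (2*(rr-1))) (𝓝[>] (0:ℝ)) (𝓝 0) := by
      have h0 : Tendsto (fun τ => (φ τ) ^ (2*(rr-1))) (𝓝[>] (0:ℝ)) (𝓝 0) :=
        (aux_rpow_tendsto_zero hr2).comp tφ
      simpa using h0.const_mul (ℓ^2)
    have t2 : Tendsto (fun τ => (∫ ξ in Ioi (g (φ τ)), f ξ) * (g (φ τ)) ^ (γ-1))
        (𝓝[>] (0:ℝ)) (𝓝 (f₀/(γ-1))) := hF.comp tgφ
    have t3 : Tendsto (fun τ => (g (φ τ) / (φ τ) ^ p) ^ (1-γ)) (𝓝[>] (0:ℝ))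
        (𝓝 (Lg ^ (1-γ))) :=
      ((Real.continuousAt_rpow_const Lg (1-γ) (Or.inl hLg.ne')).tendsto).comp (hGlim.comp tφ)
    have tsum : Tendsto (fun τ => ℓ^2 * φ τ ^ (2*(rr-1)) +
        2 * ((∫ ξ in Ioi (g (φ τ)), f ξ) * (g (φ τ)) ^ (γ-1) * (g (φ τ) / (φ τ) ^ p) ^ (1-γ)))
        (𝓝[>] (0:ℝ)) (𝓝 (2 * (f₀/(γ-1) * Lg ^ (1-γ)))) := by
      have h := t1.add ((t2.mul t3).const_mul 2)
      simpa [mul_assoc] using h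
    have tsq : Tendsto (fun τ => rr * Real.sqrt (ℓ^2 * φ τ ^ (2*(rr-1)) +
        2 * ((∫ ξ in Ioi (g (φ τ)), f ξ) * (g (φ τ)) ^ (γ-1) * (g (φ τ) / (φ τ) ^ p) ^ (1-γ))))
        (𝓝[>] (0:ℝ)) (𝓝 (rr * K)) :=
      ((Real.continuous_sqrt.tendsto _).comp tsum).const_mul rr
    apply tsq.congr'
    filter_upwards [self_mem_nhdsWithin] with τ hτ
    have hτ0 : (0:ℝ) < τ := hτ
    have hP : 0 < φ τ := hφ_pos τ hτ0
    have hX : 0 < g (φ τ) := hg_pos _ hP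
    have hFnn : 0 ≤ ∫ ξ in Ioi (g (φ τ)), f ξ :=
      setIntegral_nonneg measurableSet_Ioi fun ξ hξ => (hf_pos ξ (lt_trans hX hξ)).le
    have e0 : (g (φ τ) / (φ τ) ^ p) ^ (1-γ)
        = (g (φ τ)) ^ (1-γ) * (φ τ) ^ (2*(rr-1)) := by
      rw [Real.div_rpow hX.le (Real.rpow_nonneg hP.le _), ← Real.rpow_mul hP.le,
        div_eq_mul_inv, ← Real.rpow_neg hP.le]
      congr 1
      rw [← hexpC]; ring
    have e1 : (∫ ξ in Ioi (g (φ τ)), f ξ) * (g (φ τ)) ^ (γ-1) *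
        ((g (φ τ)) ^ (1-γ) * (φ τ) ^ (2*(rr-1)))
        = (∫ ξ in Ioi (g (φ τ)), f ξ) * (φ τ) ^ (2*(rr-1)) := by
      have h1 : (g (φ τ)) ^ (γ-1) * (g (φ τ)) ^ (1-γ) = 1 := by
        rw [← Real.rpow_add hX]; norm_num
      calc (∫ ξ in Ioi (g (φ τ)), f ξ) * (g (φ τ)) ^ (γ-1) *
            ((g (φ τ)) ^ (1-γ) * (φ τ) ^ (2*(rr-1)))
          = (∫ ξ in Ioi (g (φ τ)), f ξ) * ((g (φ τ)) ^ (γ-1) * (g (φ τ)) ^ (1-γ)) *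
            (φ τ) ^ (2*(rr-1)) := by ring
        _ = (∫ ξ in Ioi (g (φ τ)), f ξ) * (φ τ) ^ (2*(rr-1)) := by rw [h1]; ring
    have e2 : φ τ ^ (rr-1) = Real.sqrt ((φ τ) ^ (2*(rr-1))) := by
      rw [Real.sqrt_eq_rpow, ← Real.rpow_mul hP.le]
      congr 1
      ring
    rw [e0, e1]
    rw [show ℓ^2 * φ τ ^ (2*(rr-1)) + 2 * ((∫ ξ in Ioi (g (φ τ)), f ξ) * (φ τ) ^ (2*(rr-1)))
        = (ℓ^2 + 2*(∫ ξ in Ioi (g (φ τ)), f ξ)) * (φ τ) ^ (2*(rr-1)) by ring]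
    rw [Real.sqrt_mul (by positivity), ← e2]
    ring
  have hC0 : Tendsto (fun τ => φ τ ^ rr / τ) (𝓝[>] (0:ℝ)) (𝓝 (rr * K)) := by
    refine HasDerivAt.lhopital_zero_right_on_Ioo (a := 0) (b := 1) zero_lt_one
      (f' := fun τ => Real.sqrt (ℓ^2 + 2 * ∫ ξ in Ioi (g (φ τ)), f ξ) * rr * φ τ ^ (rr-1))
      (g' := fun _ => (1:ℝ)) (fun x hx => ?_) (fun x hx => hasDerivAt_id x)
      (fun x hx => one_ne_zero) ?_ ?_ ?_
    · exact (hφ' x hx.1).rpow_const (Or.inl (hφ_pos x hx.1).ne')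
    · exact (aux_rpow_tendsto_zero hr).comp tφ
    · exact Filter.tendsto_id.mono_left nhdsWithin_le_nhds
    · simpa only [div_one] using hW
  set Lφ : ℝ := (rr * K) ^ q with hLφdef
  have hLφ : 0 < Lφ := Real.rpow_pos_of_pos (mul_pos hr hK) _
  have hPhiLim : Tendsto (fun τ => φ τ / τ ^ q) (𝓝[>] (0:ℝ)) (𝓝 Lφ) := by
    have hc : Tendsto (fun x : ℝ => x ^ q) (𝓝 (rr * K)) (𝓝 Lφ) :=
      (Real.continuousAt_rpow_const _ q (Or.inl (mul_pos hr hK).ne')).tendsto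
    apply (hc.comp hC0).congr'
    filter_upwards [self_mem_nhdsWithin] with τ hτ
    have hτ0 : (0:ℝ) < τ := hτ
    have hP : 0 < φ τ := hφ_pos τ hτ0
    show (φ τ ^ rr / τ) ^ q = φ τ / τ ^ q
    rw [Real.div_rpow (Real.rpow_nonneg hP.le _) hτ0.le, ← Real.rpow_mul hP.le, hrq,
      Real.rpow_one]
  -- Step D : the main limit
  set C : ℝ := f₀ / Real.sqrt a₀ * Lg ^ (μ-γ) * Lφ ^ ((1-γ)/(1-μ)) with hCdef
  have hCpos : 0 < C :=
    mul_pos (mul_pos (div_pos hf₀ hsa₀) (Real.rpow_pos_of_pos hLg _))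
      (Real.rpow_pos_of_pos hLφ _)
  have tA : Tendsto (fun τ => f (g (φ τ)) * (g (φ τ)) ^ γ /
      Real.sqrt (a (g (φ τ)) * (g (φ τ)) ^ (2*μ))) (𝓝[>] (0:ℝ))
      (𝓝 (f₀ / Real.sqrt a₀)) :=
    (hlim_f.comp tgφ).div (hsqa.comp tgφ) hsa₀.ne'
  have tB : Tendsto (fun τ => (g (φ τ) / (φ τ) ^ p) ^ (μ-γ)) (𝓝[>] (0:ℝ))
      (𝓝 (Lg ^ (μ-γ))) :=
    ((Real.continuousAt_rpow_const Lg (μ-γ) (Or.inl hLg.ne')).tendsto).comp (hGlim.comp tφ)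
  have tC : Tendsto (fun τ => (φ τ / τ ^ q) ^ ((1-γ)/(1-μ))) (𝓝[>] (0:ℝ))
      (𝓝 (Lφ ^ ((1-γ)/(1-μ)))) :=
    ((Real.continuousAt_rpow_const Lφ ((1-γ)/(1-μ)) (Or.inl hLφ.ne')).tendsto).comp hPhiLim
  have hmain : Tendsto (fun τ : ℝ =>
      (φ τ * (f (g (φ τ)) / Real.sqrt (a (g (φ τ))))) / τ ^ ((2 - 2*γ) / (1 + γ - 2*μ)))
      (𝓝[>] (0:ℝ)) (𝓝 C) := by
    apply ((tA.mul tB).mul tC).congr'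
    filter_upwards [self_mem_nhdsWithin] with τ hτ
    have hτ0 : (0:ℝ) < τ := hτ
    have hP : 0 < φ τ := hφ_pos τ hτ0
    have hX : 0 < g (φ τ) := hg_pos _ hP
    exact aux_pow hX hP hτ0 (ha_pos _ hX) hμ₁ hden
  refine ⟨C, hCpos, hmain, ?_⟩
  -- Step E : integrability
  set e : ℝ := (2 - 2*γ) / (1 + γ - 2*μ) with hedef
  set w : ℝ → ℝ := fun ξ => φ ξ * (f (g (φ ξ)) / Real.sqrt (a (g (φ ξ)))) with hwdef
  have hw_pos : ∀ ξ > (0:ℝ), 0 < w ξ := fun ξ hξ =>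
    mul_pos (hφ_pos ξ hξ) (div_pos (hf_pos _ (hg_pos _ (hφ_pos ξ hξ)))
      (Real.sqrt_pos.2 (ha_pos _ (hg_pos _ (hφ_pos ξ hξ)))))
  have hw_cont : ContinuousOn w (Ioi 0) := by
    have hφc : ContinuousOn φ (Ioi 0) := hφ_cont.mono Ioi_subset_Ici_self
    have hgφ : ContinuousOn (fun ξ => g (φ ξ)) (Ioi 0) :=
      hg_cont.comp hφc fun ξ hξ => (hφ_pos ξ hξ).le
    have hmaps : MapsTo (fun ξ => g (φ ξ)) (Ioi 0) (Ioi 0) :=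
      fun ξ hξ => hg_pos _ (hφ_pos ξ hξ)
    have hfc : ContinuousOn (fun ξ => f (g (φ ξ))) (Ioi 0) :=
      (hf_reg.continuousOn).comp hgφ hmaps
    have hac : ContinuousOn (fun ξ => Real.sqrt (a (g (φ ξ)))) (Ioi 0) :=
      Real.continuous_sqrt.comp_continuousOn ((ha_reg.continuousOn).comp hgφ hmaps)
    exact hφc.mul (hfc.div hac fun ξ hξ =>
      (Real.sqrt_pos.2 (ha_pos _ (hg_pos _ (hφ_pos ξ hξ)))).ne')
  obtain ⟨δ₁, hδ₁, hδprop⟩ := Metric.tendsto_nhdsWithin_nhds.1 hmain (C/2) (by positivity)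
  set δ : ℝ := min (δ₁/2) (1/2) with hδdef
  have hδ0 : 0 < δ := lt_min (by linarith) (by norm_num)
  have hδ1 : δ < 1 := lt_of_le_of_lt (min_le_right _ _) (by norm_num)
  have hbnd : ∀ τ ∈ Ioo (0:ℝ) δ, C/2 * τ ^ e ≤ w τ ∧ w τ ≤ 3*C/2 * τ ^ e := by
    intro τ hτ
    have hτ0 : 0 < τ := hτ.1
    have hτδ : τ < δ₁ := by
      have := lt_of_lt_of_le hτ.2 (min_le_left _ _)
      linarith
    have h0 := hδprop (mem_Ioi.2 hτ0)
      (by rw [Real.dist_eq, sub_zero, abs_of_pos hτ0]; exact hτδ)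
    have h : |w τ / τ ^ e - C| < C/2 := by
      rw [← Real.dist_eq]; exact h0
    obtain ⟨hl, hr'⟩ := abs_lt.1 h
    have hTp : 0 < τ ^ e := Real.rpow_pos_of_pos hτ0 _
    constructor
    · have h2 : C/2 * τ ^ e ≤ (w τ / τ ^ e) * τ ^ e :=
        mul_le_mul_of_nonneg_right (by linarith) hTp.le
      rwa [div_mul_cancel₀ _ hTp.ne'] at h2
    · have h2 : (w τ / τ ^ e) * τ ^ e ≤ 3*C/2 * τ ^ e :=
        mul_le_mul_of_nonneg_right (by linarith) hTp.le
      rwa [div_mul_cancel₀ _ hTp.ne'] at h2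
  have hiff : (-1 < e) ↔ γ < 3 - 2*μ := by
    rw [hedef, lt_div_iff₀ hden]
    constructor <;> intro h <;> linarith
  constructor
  · intro hInt
    by_contra hcon
    have he : e ≤ -1 := not_lt.1 fun h => hcon (hiff.1 h)
    have hIδ : IntegrableOn w (Ioo 0 δ) := hInt.mono_set (Ioo_subset_Ioo le_rfl hδ1.le)
    have hrint : IntegrableOn (fun τ : ℝ => τ ^ e) (Ioo 0 δ) := by
      apply Integrable.mono' (hIδ.const_mul (2/C))
      · exact (ContinuousOn.aestronglyMeasurable (fun τ hτ =>
          (Real.continuousAt_rpow_const τ e (Or.inl (ne_of_gt hτ.1))).continuousWithinAt)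
          measurableSet_Ioo)
      · rw [ae_restrict_iff' measurableSet_Ioo]
        refine ae_of_all _ fun τ hτ => ?_
        have h1 := (hbnd τ hτ).1
        rw [Real.norm_eq_abs, abs_of_pos (Real.rpow_pos_of_pos hτ.1 _)]
        calc τ ^ e = (2/C) * (C/2 * τ ^ e) := by field_simp
          _ ≤ (2/C) * w τ := mul_le_mul_of_nonneg_left h1 (by positivity)
    rw [intervalIntegral.integrableOn_Ioo_rpow_iff hδ0] at hrint
    linarith
  · intro hlt
    have he : -1 < e := hiff.2 hlt
    have h1 : IntegrableOn w (Ioo 0 δ) := by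
      have hrint : IntegrableOn (fun τ : ℝ => τ ^ e) (Ioo 0 δ) :=
        (intervalIntegral.integrableOn_Ioo_rpow_iff hδ0).2 he
      apply Integrable.mono' (hrint.const_mul (3*C/2))
      · exact (hw_cont.mono fun x hx => hx.1).aestronglyMeasurable measurableSet_Ioo
      · rw [ae_restrict_iff' measurableSet_Ioo]
        refine ae_of_all _ fun τ hτ => ?_
        rw [Real.norm_eq_abs, abs_of_pos (hw_pos τ hτ.1)]
        exact (hbnd τ hτ).2
    have h2 : IntegrableOn w (Icc δ 1) :=
      (hw_cont.mono fun x hx => lt_of_lt_of_le hδ0 hx.1).integrableOn_Icc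
    exact (h1.union h2).mono_set fun x hx =>
      if hxδ : x < δ then Or.inl ⟨hx.1, hxδ⟩ else Or.inr ⟨not_lt.1 hxδ, hx.2.le⟩
end
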